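/- arXiv:1805.12500 — 6 statements merged into one kernel-verified Lean document; each statement's English description precedes it below -/
import Mathlib

section
/- Let m ≥ 2 be a natural number, let l ∈ {2, …, m}, and let i₁, …, i_l be natural numbers such that m^{i₁} + ⋯ + m^{i_{l−1}} = (l−1)·m^{i_l}. Then i₁ = i₂ = ⋯ = i_l. -/
/-- Arithmetic lemma: if `m ≥ 2`, `2 ≤ l ≤ m` and
`m^{i 1} + ⋯ + m^{i (l-1)} = (l-1) * m^{i l}`, then `i 1 = ⋯ = i l`. -/
theorem stmt_0 (m l : ℕ) (hm : 2 ≤ m) (hl2 : 2 ≤ l) (hlm : l ≤ m) (i : ℕ → ℕ)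
    (h : ∑ j ∈ Finset.Ico 1 l, m ^ i j = (l - 1) * m ^ i l) :
    ∀ j ∈ Finset.Icc 1 l, ∀ k ∈ Finset.Icc 1 l, i j = i k := by
  set s := Finset.Ico 1 l with hs
  have hcard : s.card = l - 1 := by simp [hs]
  have hne : s.Nonempty := by rw [hs, Finset.nonempty_Ico]; omega
  set e := i l with he
  -- Step 1: every exponent is at least e
  have step1 : ∀ j ∈ s, e ≤ i j := by
    by_contra hcon
    push_neg at hcon
    set t := s.inf' hne i with ht
    have htle : ∀ j ∈ s, t ≤ i j := fun j hj => Finset.inf'_le i hj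
    obtain ⟨j0, hj0, hj0t⟩ := Finset.exists_mem_eq_inf' hne i
    have hte : t < e := by
      obtain ⟨j1, hj1, hj1e⟩ := hcon
      have := htle j1 hj1
      omega
    set A := s.filter (fun j => i j = t) with hA
    set B := s.filter (fun j => ¬ i j = t) with hB
    have hsplit : ∑ j ∈ A, m ^ i j + ∑ j ∈ B, m ^ i j = ∑ j ∈ s, m ^ i j :=
      Finset.sum_filter_add_sum_filter_not s _ _
    have hAsum : ∑ j ∈ A, m ^ i j = A.card * m ^ t := by
      rw [Finset.sum_congr rfl (fun j hj => ?_), Finset.sum_const, smul_eq_mul]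
      rw [hA, Finset.mem_filter] at hj
      rw [hj.2]
    have hAcard1 : 1 ≤ A.card :=
      Finset.card_pos.mpr ⟨j0, Finset.mem_filter.mpr ⟨hj0, hj0t.symm⟩⟩
    have hAcard2 : A.card < m := by
      have h1 : A.card ≤ s.card := Finset.card_filter_le s _
      omega
    have hdvdB : m ^ (t + 1) ∣ ∑ j ∈ B, m ^ i j := by
      apply Finset.dvd_sum
      intro j hj
      rw [hB, Finset.mem_filter] at hj
      exact pow_dvd_pow m (by have := htle j hj.1; omega)
    have hdvdR : m ^ (t + 1) ∣ (l - 1) * m ^ e :=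
      Dvd.dvd.mul_left (pow_dvd_pow m (by omega)) _
    have hdvdA : m ^ (t + 1) ∣ A.card * m ^ t := by
      have h2 : ∑ j ∈ A, m ^ i j = (l - 1) * m ^ e - ∑ j ∈ B, m ^ i j := by omega
      rw [← hAsum, h2]
      exact Nat.dvd_sub hdvdR hdvdB
    have hmdvd : m ∣ A.card := by
      have hpow : m ^ (t + 1) = m ^ t * m := by ring
      rw [hpow, mul_comm A.card (m ^ t)] at hdvdA
      have hmt : 0 < m ^ t := Nat.pow_pos (by omega)
      exact (Nat.mul_dvd_mul_iff_left hmt).mp hdvdA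
    have := Nat.le_of_dvd (by omega) hmdvd
    omega
  -- Step 2: every exponent equals e
  have step2 : ∀ j ∈ s, i j = e := by
    by_contra hcon
    push_neg at hcon
    obtain ⟨j0, hj0, hj0e⟩ := hcon
    have hlt : e < i j0 := lt_of_le_of_ne (step1 j0 hj0) (Ne.symm hj0e)
    have hsum : ∑ j ∈ s, m ^ e < ∑ j ∈ s, m ^ i j :=
      Finset.sum_lt_sum (fun j hj => Nat.pow_le_pow_right (by omega) (step1 j hj))
        ⟨j0, hj0, Nat.pow_lt_pow_right (by omega) hlt⟩
    rw [Finset.sum_const, smul_eq_mul, hcard] at hsum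
    omega
  have key : ∀ j, 1 ≤ j → j ≤ l → i j = e := by
    intro j h1 h2
    rcases eq_or_lt_of_le h2 with rfl | hlt
    · rfl
    · exact step2 j (Finset.mem_Ico.mpr ⟨h1, hlt⟩)
  intro j hj k hk
  rw [Finset.mem_Icc] at hj hk
  rw [key j hj.1 hj.2, key k hk.1 hk.2]
end

section
/- For every n there exists a choice of signs ε_{i,j} ∈ {−1,1} (1 ≤ i,j ≤ n) such that sup_{ζ ∈ [−1,1]^n} sup_{w ∈ [−1,1]^n} |Σ_{i,j=1}^n ζ_j w_i ε_{i,j}| ≤ C n^{3/2}, where C is an absolute constant. -/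
open Finset

/-- Walsh / Hadamard sign. -/
def wal {d : ℕ} (x y : Fin d → Bool) : ℝ :=
  ∏ k, (if x k ∧ y k then (-1 : ℝ) else 1)

lemma wal_sign {d : ℕ} (x y : Fin d → Bool) : wal x y = 1 ∨ wal x y = -1 := by
  unfold wal
  induction (univ : Finset (Fin d)) using Finset.induction with
  | empty => left; simp
  | insert a s h ih =>
    rw [Finset.prod_insert h]
    rcases ih with ih | ih <;> rw [ih] <;> split <;> norm_num

lemma wal_ortho {d : ℕ} (y y' : Fin d → Bool) :
    ∑ x : Fin d → Bool, wal x y * wal x y' = if y = y' then (2 ^ d : ℝ) else 0 := by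
  have h1 : ∀ x : Fin d → Bool, wal x y * wal x y' =
      ∏ k, ((if x k ∧ y k then (-1 : ℝ) else 1) * (if x k ∧ y' k then (-1 : ℝ) else 1)) := by
    intro x; rw [wal, wal, ← Finset.prod_mul_distrib]
  simp only [h1]
  rw [← Fintype.prod_sum (fun k (b : Bool) =>
      (if b ∧ y k then (-1 : ℝ) else 1) * (if b ∧ y' k then (-1 : ℝ) else 1))]
  have h2 : ∀ k : Fin d, (∑ b : Bool,
      (if b ∧ y k then (-1 : ℝ) else 1) * (if b ∧ y' k then (-1 : ℝ) else 1)) =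
      if y k = y' k then 2 else 0 := by
    intro k
    rw [Fintype.sum_bool]
    cases hy : y k <;> cases hy' : y' k <;> simp <;> norm_num
  simp only [h2]
  by_cases h : y = y'
  · subst h; simp
  · rw [if_neg h]
    obtain ⟨k, hk⟩ : ∃ k, y k ≠ y' k := Function.ne_iff.mp h
    exact Finset.prod_eq_zero (Finset.mem_univ k) (by rw [if_neg hk])

/-- Bilinear Kahane–Salem–Zygmund inequality: there is an absolute constant `C` such that for
every `n` there are signs `ε_{i,j}` whose bilinear form on `ℓ_∞^n × ℓ_∞^n` has norm `≤ C n^{3/2}`. -/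
theorem stmt_5 :
    ∃ C : ℝ, 0 < C ∧ ∀ n : ℕ, ∃ ε : Fin n → Fin n → ℝ,
      (∀ i j, ε i j = 1 ∨ ε i j = -1) ∧
      ∀ ζ w : Fin n → ℝ, (∀ j, |ζ j| ≤ 1) → (∀ i, |w i| ≤ 1) →
        |∑ i, ∑ j, ζ j * w i * ε i j| ≤ C * (n : ℝ) ^ ((3 : ℝ) / 2) := by
  refine ⟨2, by norm_num, fun n => ?_⟩
  rcases Nat.eq_zero_or_pos n with hn0 | hn0
  · subst hn0
    refine ⟨fun i j => 1, fun i => i.elim0, fun ζ w _ _ => ?_⟩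
    simp [Real.zero_rpow (by norm_num : (3:ℝ)/2 ≠ 0)]
  set d := Nat.clog 2 n with hd
  -- an embedding of `Fin n` into the Boolean cube of dimension `d`
  have hcard : Fintype.card (Fin n) ≤ Fintype.card (Fin d → Bool) := by
    simp only [Fintype.card_fin, Fintype.card_fun, Fintype.card_bool, Fintype.card_fin]
    exact Nat.le_pow_clog (by norm_num) n
  obtain ⟨e⟩ := Function.Embedding.nonempty_of_card_le hcard
  refine ⟨fun i j => wal (e i) (e j), fun i j => wal_sign _ _, fun ζ w hζ hw => ?_⟩
  set s : (Fin d → Bool) → ℝ := fun x => ∑ j, ζ j * wal x (e j) with hs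
  -- m = 2^d ≤ 2n
  have hm2n : (2 ^ d : ℝ) ≤ 2 * n := by
    rcases Nat.lt_or_ge n 2 with h2 | h2
    · have hn1 : n = 1 := by omega
      have : d = 0 := by rw [hd, hn1]; exact Nat.clog_one_right 2
      rw [this, hn1]
      norm_num
    · have h1 : 2 ^ (d - 1) < n := Nat.pow_pred_clog_lt_self (by norm_num) h2
      have hd1 : 1 ≤ d := Nat.clog_pos (by norm_num) h2
      have : (2 : ℕ) ^ d ≤ 2 * n := by
        calc (2:ℕ) ^ d = 2 * 2 ^ (d - 1) := by
              rw [← pow_succ']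
              congr 1
              omega
          _ ≤ 2 * n := by omega
      exact_mod_cast this
  -- rewrite the double sum
  have hrw : (∑ i, ∑ j, ζ j * w i * wal (e i) (e j)) = ∑ i, w i * s (e i) := by
    refine Finset.sum_congr rfl fun i _ => ?_
    rw [hs, Finset.mul_sum]
    exact Finset.sum_congr rfl fun j _ => by ring
  rw [hrw]
  -- step 1 : bound by sum of |s| over all of the cube
  have h1 : |∑ i, w i * s (e i)| ≤ ∑ x : Fin d → Bool, |s x| := by
    calc |∑ i, w i * s (e i)| ≤ ∑ i, |w i * s (e i)| := Finset.abs_sum_le_sum_abs _ _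
      _ ≤ ∑ i, |s (e i)| := by
          refine Finset.sum_le_sum fun i _ => ?_
          rw [abs_mul]
          exact mul_le_of_le_one_left (abs_nonneg _) (hw i)
      _ = ∑ x ∈ Finset.univ.image e, |s x| := by
          rw [Finset.sum_image (fun a _ b _ h => e.injective h)]
      _ ≤ ∑ x : Fin d → Bool, |s x| :=
          Finset.sum_le_sum_of_subset_of_nonneg (Finset.subset_univ _)
            (fun x _ _ => abs_nonneg _)
  -- step 2 : ∑ s² = 2^d ∑ ζ² ≤ 2^d n
  have h2 : ∑ x : Fin d → Bool, s x ^ 2 ≤ 2 ^ d * n := by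
    have hsq : ∀ x, s x ^ 2 = ∑ j, ∑ j', ζ j * ζ j' * (wal x (e j) * wal x (e j')) := by
      intro x
      rw [hs, sq, Finset.sum_mul_sum]
      exact Finset.sum_congr rfl fun j _ => Finset.sum_congr rfl fun j' _ => by ring
    calc ∑ x : Fin d → Bool, s x ^ 2
        = ∑ j, ∑ j', ζ j * ζ j' * ∑ x : Fin d → Bool, wal x (e j) * wal x (e j') := by
          simp only [hsq]
          rw [Finset.sum_comm]
          refine Finset.sum_congr rfl fun j _ => ?_
          rw [Finset.sum_comm]
          refine Finset.sum_congr rfl fun j' _ => ?_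
          rw [Finset.mul_sum]
      _ = ∑ j, ζ j ^ 2 * 2 ^ d := by
          refine Finset.sum_congr rfl fun j _ => ?_
          have : ∀ j' : Fin n, ζ j * ζ j' * ∑ x : Fin d → Bool, wal x (e j) * wal x (e j')
              = if j' = j then ζ j ^ 2 * 2 ^ d else 0 := by
            intro j'
            rw [wal_ortho]
            by_cases h : j' = j
            · subst h; simp [sq]
            · rw [if_neg (fun hc => h (e.injective hc.symm)), if_neg h, mul_zero]
          simp only [this]
          simp [Finset.sum_ite_eq']
      _ ≤ ∑ _j : Fin n, 1 * 2 ^ d := by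
          refine Finset.sum_le_sum fun j _ => ?_
          have h6 : ζ j ^ 2 ≤ 1 := sq_abs (ζ j) ▸ pow_le_one₀ (abs_nonneg (ζ j)) (hζ j)
          exact mul_le_mul_of_nonneg_right h6 (by positivity)
      _ = 2 ^ d * n := by simp [mul_comm]
  -- step 3 : Cauchy–Schwarz
  have h3 : (∑ x : Fin d → Bool, |s x|) ≤ 2 ^ d * Real.sqrt n := by
    have hcs : (∑ x : Fin d → Bool, |s x|) ^ 2
        ≤ (Fintype.card (Fin d → Bool) : ℝ) * ∑ x : Fin d → Bool, |s x| ^ 2 := by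
      simpa using sq_sum_le_card_mul_sum_sq (s := (Finset.univ : Finset (Fin d → Bool)))
        (f := fun x => |s x|)
    have hcardval : (Fintype.card (Fin d → Bool) : ℝ) = 2 ^ d := by
      simp [Fintype.card_fun]
    rw [hcardval] at hcs
    simp only [sq_abs] at hcs
    have hb : (∑ x : Fin d → Bool, |s x|) ^ 2 ≤ (2 ^ d * Real.sqrt n) ^ 2 := by
      have h4 : (2:ℝ) ^ d * ∑ x : Fin d → Bool, s x ^ 2 ≤ 2 ^ d * (2 ^ d * n) :=
        mul_le_mul_of_nonneg_left h2 (by positivity)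
      have h5 : ((2:ℝ) ^ d * Real.sqrt n) ^ 2 = 2 ^ d * (2 ^ d * n) := by
        rw [mul_pow, Real.sq_sqrt (by positivity)]
        ring
      rw [h5]
      exact le_trans hcs h4
    have ha : (0:ℝ) ≤ ∑ x : Fin d → Bool, |s x| :=
      Finset.sum_nonneg fun x _ => abs_nonneg _
    have hbpos : (0:ℝ) ≤ 2 ^ d * Real.sqrt n := by positivity
    nlinarith [hb, ha, hbpos]
  -- conclusion
  have hsqrtn : (0:ℝ) ≤ Real.sqrt n := Real.sqrt_nonneg _
  have hfin : (2:ℝ) ^ d * Real.sqrt n ≤ 2 * (n:ℝ) ^ ((3:ℝ)/2) := by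
    have hpow : ((n:ℝ)) ^ ((3:ℝ)/2) = n * Real.sqrt n := by
      rw [show (3:ℝ)/2 = 1 + 1/2 by norm_num,
        Real.rpow_add' (by positivity) (by norm_num), Real.rpow_one,
        ← Real.sqrt_eq_rpow]
    rw [hpow, ← mul_assoc]
    exact mul_le_mul_of_nonneg_right hm2n hsqrtn
  exact le_trans h1 (le_trans h3 hfin)
end

section
/- For any r < 2, the identity operator on ℓ₁ is not absolutely (r,1)-summing. Concretely: there is no constant C such that for all n and all finite sequences x₁,…,x_n ∈ ℓ₁, (Σ_{i=1}^n ‖x_i‖₁^r)^{1/r} ≤ C · sup_{‖ζ‖_∞ ≤ 1} Σ_{i=1}^n |⟨ζ, x_i⟩|. -/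
open Finset
open scoped ENNReal

section MacPhail


noncomputable def hsign : Bool → Bool → ℝ := fun a b => if a && b then -1 else 1

noncomputable def Had (k : ℕ) (i j : Fin k → Bool) : ℝ := ∏ t, hsign (i t) (j t)

lemma hsign_abs (a b : Bool) : |hsign a b| = 1 := by
  cases a <;> cases b <;> simp [hsign]

lemma hsign_symm (a b : Bool) : hsign a b = hsign b a := by
  cases a <;> cases b <;> simp [hsign]

lemma Had_abs (k : ℕ) (i j : Fin k → Bool) : |Had k i j| = 1 := by
  rw [Had, Finset.abs_prod]
  simp [hsign_abs]

lemma Had_symm (k : ℕ) (i j : Fin k → Bool) : Had k i j = Had k j i := by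
  rw [Had, Had]
  exact Finset.prod_congr rfl fun t _ => hsign_symm _ _

lemma hsign_sum (a a' : Bool) :
    ∑ b : Bool, hsign a b * hsign a' b = if a = a' then 2 else 0 := by
  cases a <;> cases a' <;> norm_num [hsign, Fintype.sum_bool]

lemma Had_orth (k : ℕ) (i i' : Fin k → Bool) :
    ∑ j : Fin k → Bool, Had k i j * Had k i' j = if i = i' then (2:ℝ)^k else 0 := by
  have h1 : ∀ j : Fin k → Bool, Had k i j * Had k i' j
      = ∏ t, (hsign (i t) (j t) * hsign (i' t) (j t)) := fun j => by
    rw [Had, Had, ← Finset.prod_mul_distrib]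
  calc ∑ j : Fin k → Bool, Had k i j * Had k i' j
      = ∑ j : Fin k → Bool, ∏ t, (hsign (i t) (j t) * hsign (i' t) (j t)) := by
        exact Finset.sum_congr rfl fun j _ => h1 j
    _ = ∏ t, ∑ b : Bool, hsign (i t) b * hsign (i' t) b :=
        (Fintype.prod_sum fun t b => hsign (i t) b * hsign (i' t) b).symm
    _ = ∏ t, (if i t = i' t then (2:ℝ) else 0) := by
        exact Finset.prod_congr rfl fun t _ => hsign_sum _ _
    _ = if i = i' then (2:ℝ)^k else 0 := by
        by_cases h : i = i'
        · simp [h, Finset.prod_const, Finset.card_univ]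
        · simp only [h, if_false]
          obtain ⟨t, ht⟩ := Function.ne_iff.mp h
          exact Finset.prod_eq_zero (Finset.mem_univ t) (by simp [ht])

lemma key (k : ℕ) (η : (Fin k → Bool) → ℝ) (hη : ∀ b, |η b| ≤ 1) :
    ∑ i : Fin k → Bool, |∑ b, η b * Had k i b| ≤ Real.sqrt (((2:ℝ)^k)^3) := by
  set n : ℝ := (2:ℝ)^k with hn
  have hn0 : (0:ℝ) ≤ n := by positivity
  have hcard : ((Fintype.card (Fin k → Bool) : ℕ) : ℝ) = n := by
    simp [hn]
  have h2 : ∑ i : Fin k → Bool, (∑ b, η b * Had k i b)^2 = n * ∑ b, (η b)^2 := by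
    have expand : ∀ i : Fin k → Bool, (∑ b, η b * Had k i b)^2
        = ∑ b, ∑ c, (η b * η c) * (Had k i b * Had k i c) := by
      intro i
      rw [sq, Finset.sum_mul_sum]
      exact Finset.sum_congr rfl fun b _ => Finset.sum_congr rfl fun c _ => by ring
    calc ∑ i : Fin k → Bool, (∑ b, η b * Had k i b)^2
        = ∑ b, ∑ c, (η b * η c) * (∑ i : Fin k → Bool, Had k i b * Had k i c) := by
          simp_rw [expand]
          rw [Finset.sum_comm]
          refine Finset.sum_congr rfl fun b _ => ?_
          rw [Finset.sum_comm]
          refine Finset.sum_congr rfl fun c _ => ?_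
          rw [Finset.mul_sum]
      _ = ∑ b, ∑ c, (η b * η c) * (if b = c then n else 0) := by
          refine Finset.sum_congr rfl fun b _ => Finset.sum_congr rfl fun c _ => ?_
          congr 1
          calc ∑ i : Fin k → Bool, Had k i b * Had k i c
              = ∑ i : Fin k → Bool, Had k b i * Had k c i := by
                refine Finset.sum_congr rfl fun i _ => ?_
                rw [Had_symm k i b, Had_symm k i c]
            _ = if b = c then n else 0 := Had_orth k b c
      _ = ∑ b, (η b)^2 * n := by
          refine Finset.sum_congr rfl fun b _ => ?_
          simp [mul_ite, Finset.sum_ite_eq, sq]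
      _ = n * ∑ b, (η b)^2 := by rw [← Finset.sum_mul, mul_comm]
  have hsq : (∑ i : Fin k → Bool, |∑ b, η b * Had k i b|)^2 ≤ n^3 := by
    have cs := Finset.sum_mul_sq_le_sq_mul_sq Finset.univ (fun _ : Fin k → Bool => (1:ℝ))
      (fun i => |∑ b, η b * Had k i b|)
    simp only [one_mul, one_pow, sq_abs] at cs
    have hcard' : ∑ _i : Fin k → Bool, (1:ℝ) = n := by
      rw [Finset.sum_const, Finset.card_univ, nsmul_eq_mul, mul_one, hcard]
    rw [hcard', h2] at cs
    have hb : ∑ b : Fin k → Bool, (η b)^2 ≤ n := by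
      calc ∑ b : Fin k → Bool, (η b)^2 ≤ ∑ _b : Fin k → Bool, (1:ℝ) := by
            refine Finset.sum_le_sum fun b _ => ?_
            have := hη b
            nlinarith [abs_nonneg (η b), sq_abs (η b)]
        _ = n := by rw [Finset.sum_const, Finset.card_univ, nsmul_eq_mul, mul_one, hcard]
    nlinarith [Finset.sum_nonneg (fun b (_ : b ∈ Finset.univ) => sq_nonneg (η b)),
      mul_nonneg hn0 hn0, mul_le_mul_of_nonneg_left hb (mul_nonneg hn0 hn0)]
  have hT0 : 0 ≤ ∑ i : Fin k → Bool, |∑ b, η b * Had k i b| :=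
    Finset.sum_nonneg fun i _ => abs_nonneg _
  exact Real.le_sqrt_of_sq_le hsq

noncomputable def rowv (k : ℕ) (e : (Fin k → Bool) ≃ Fin (2^k)) (i : Fin k → Bool) :
    lp (fun _ : ℕ => ℝ) 1 :=
  ∑ b : Fin k → Bool, lp.single 1 ((e b : ℕ)) (Had k i b)

variable (k : ℕ) (e : (Fin k → Bool) ≃ Fin (2^k))

noncomputable def fsupp (i : Fin k → Bool) : ℕ → ℝ :=
  fun m => if h : m < 2^k then Had k i (e.symm ⟨m, h⟩) else 0

def suppS : Finset ℕ := Finset.image (fun b => ((e b : Fin (2^k)) : ℕ)) Finset.univ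

lemma e_inj : Function.Injective (fun b => ((e b : Fin (2^k)) : ℕ)) :=
  Fin.val_injective.comp e.injective

lemma fsupp_eb (i b) : fsupp k e i ((e b : ℕ)) = Had k i b := by
  rw [fsupp]
  rw [dif_pos (e b).isLt]
  have h2 : (⟨((e b : Fin (2^k)) : ℕ), (e b).isLt⟩ : Fin (2^k)) = e b := Fin.eta _ _
  rw [h2, e.symm_apply_apply]

lemma rowv_eq_sum (i : Fin k → Bool) :
    rowv k e i = ∑ m ∈ suppS k e, lp.single 1 m (fsupp k e i m) := by
  rw [suppS, Finset.sum_image (fun b _ c _ h => e_inj k e h), rowv]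
  refine Finset.sum_congr rfl fun b _ => ?_
  rw [fsupp_eb]

lemma rowv_norm (i : Fin k → Bool) : ‖rowv k e i‖ = (2:ℝ)^k := by
  have hp : (0:ℝ) < (1 : ℝ≥0∞).toReal := by norm_num
  have h := lp.norm_sum_single (E := fun _ : ℕ => ℝ) hp (fsupp k e i) (suppS k e)
  rw [← rowv_eq_sum] at h
  rw [ENNReal.toReal_one] at h
  simp only [Real.rpow_one] at h
  rw [h, suppS, Finset.sum_image (fun b _ c _ h => e_inj k e h)]
  have : ∀ b : Fin k → Bool, ‖fsupp k e i ((e b : ℕ))‖ = 1 := by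
    intro b; rw [fsupp_eb, Real.norm_eq_abs, Had_abs]
  rw [Finset.sum_congr rfl fun b _ => this b]
  simp [Finset.card_univ]

lemma rowv_apply_ne (i : Fin k → Bool) (m : ℕ) (hm : m ∉ suppS k e) :
    (rowv k e i : ℕ → ℝ) m = 0 := by
  rw [rowv, lp.coeFn_sum, Finset.sum_apply]
  refine Finset.sum_eq_zero fun b _ => ?_
  refine lp.single_apply_ne 1 _ _ ?_
  intro h
  exact hm (h ▸ Finset.mem_image_of_mem _ (Finset.mem_univ b))

lemma rowv_apply_eb (i b) : (rowv k e i : ℕ → ℝ) ((e b : ℕ)) = Had k i b := by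
  rw [rowv, lp.coeFn_sum, Finset.sum_apply]
  rw [Finset.sum_eq_single b]
  · exact lp.single_apply_self 1 _ _
  · intro c _ hc
    exact lp.single_apply_ne 1 _ _ (fun h => hc (e_inj k e h).symm)
  · simp

lemma rowv_tsum (i : Fin k → Bool) (ζ : ℕ → ℝ) :
    ∑' j, ζ j * (rowv k e i : ℕ → ℝ) j = ∑ b : Fin k → Bool, ζ (e b : ℕ) * Had k i b := by
  rw [tsum_eq_sum (s := suppS k e) (fun m hm => by rw [rowv_apply_ne k e i m hm, mul_zero])]
  rw [suppS, Finset.sum_image (fun b _ c _ h => e_inj k e h)]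
  exact Finset.sum_congr rfl fun b _ => by rw [rowv_apply_eb]

/-- MacPhail's theorem: for `r < 2`, the identity on `ℓ₁` is not absolutely `(r,1)`-summing. -/
theorem stmt_6 (r : ℝ) (hr0 : 0 < r) (hr : r < 2) :
    ¬ ∃ C : ℝ, ∀ (n : ℕ) (x : Fin n → lp (fun _ : ℕ => ℝ) 1),
      (∑ i, ‖x i‖ ^ r) ^ (1 / r) ≤
        C * ⨆ ζ : {ζ : ℕ → ℝ // ∀ j, |ζ j| ≤ 1},
          ∑ i, |∑' j, ζ.1 j * (x i : ℕ → ℝ) j| := by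
  rintro ⟨C, hC⟩
  set ε : ℝ := 1/r - 1/2 with hεdef
  have hε0 : 0 < ε := by
    have h : (1:ℝ)/2 < 1/r := by
      rw [div_lt_div_iff₀ (by norm_num) hr0]
      linarith
    simp only [hεdef]; linarith
  set M : ℝ := max C 1 with hMdef
  have hM1 : (1:ℝ) ≤ M := le_max_right _ _
  have hM0 : (0:ℝ) < M := lt_of_lt_of_le one_pos hM1
  obtain ⟨k, hk⟩ := pow_unbounded_of_one_lt (M ^ (1/ε)) (by norm_num : (1:ℝ) < 2)
  set N : ℝ := (2:ℝ)^k with hN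
  have hN0 : (0:ℝ) < N := by positivity
  have hMN : M < N ^ ε := by
    have h2 : (M ^ (1/ε)) ^ ε < N ^ ε :=
      Real.rpow_lt_rpow (Real.rpow_nonneg hM0.le _) hk hε0
    rwa [← Real.rpow_mul hM0.le, one_div_mul_cancel hε0.ne', Real.rpow_one] at h2
  let e : (Fin k → Bool) ≃ Fin (2^k) := Fintype.equivFinOfCardEq (by simp)
  let x : Fin (2^k) → lp (fun _ : ℕ => ℝ) 1 := fun a => rowv k e (e.symm a)
  have hCineq := hC (2^k) x
  -- LHS value
  have hLHS : (∑ a, ‖x a‖ ^ r) ^ (1/r) = N ^ ((1+r) * (1/r)) := by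
    have h1 : ∀ a : Fin (2^k), ‖x a‖ ^ r = N ^ r := fun a => by
      rw [show ‖x a‖ = N from rowv_norm k e _]
    rw [Finset.sum_congr rfl fun a _ => h1 a, Finset.sum_const, Finset.card_univ,
      Fintype.card_fin, nsmul_eq_mul]
    have h2 : (((2:ℕ)^k : ℕ) : ℝ) * N ^ r = N ^ (1 + r) := by
      rw [Real.rpow_add hN0, Real.rpow_one]
      push_cast
      rw [hN]
    rw [h2, ← Real.rpow_mul hN0.le]
  -- sup bound
  have hbound : ∀ ζ : {ζ : ℕ → ℝ // ∀ j, |ζ j| ≤ 1},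
      ∑ a, |∑' j, ζ.1 j * (x a : ℕ → ℝ) j| ≤ Real.sqrt (N^3) := by
    intro ζ
    have h3 : ∀ a : Fin (2^k), |∑' j, ζ.1 j * (x a : ℕ → ℝ) j|
        = |∑ b : Fin k → Bool, ζ.1 (e b : ℕ) * Had k (e.symm a) b| := fun a => by
      rw [rowv_tsum]
    rw [Finset.sum_congr rfl fun a _ => h3 a]
    have h4 := Equiv.sum_comp e.symm
      (fun i => |∑ b : Fin k → Bool, ζ.1 (e b : ℕ) * Had k i b|)
    rw [show (∑ a : Fin (2^k), |∑ b : Fin k → Bool, ζ.1 (e b : ℕ) * Had k (e.symm a) b|)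
      = ∑ i : Fin k → Bool, |∑ b : Fin k → Bool, ζ.1 (e b : ℕ) * Had k i b| from h4]
    exact key k (fun b => ζ.1 (e b : ℕ)) (fun b => ζ.2 _)
  set S : ℝ := ⨆ ζ : {ζ : ℕ → ℝ // ∀ j, |ζ j| ≤ 1},
      ∑ a, |∑' j, ζ.1 j * (x a : ℕ → ℝ) j| with hSdef
  have hS_le : S ≤ Real.sqrt (N^3) := Real.iSup_le hbound (Real.sqrt_nonneg _)
  have hS0 : 0 ≤ S := by
    have hbdd : BddAbove (Set.range fun ζ : {ζ : ℕ → ℝ // ∀ j, |ζ j| ≤ 1} =>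
        ∑ a, |∑' j, ζ.1 j * (x a : ℕ → ℝ) j|) := by
      refine ⟨Real.sqrt (N^3), ?_⟩
      rintro _ ⟨ζ, rfl⟩
      exact hbound ζ
    have := le_ciSup hbdd (⟨fun _ => 0, fun j => by simp⟩ :
      {ζ : ℕ → ℝ // ∀ j, |ζ j| ≤ 1})
    refine le_trans ?_ this
    exact Finset.sum_nonneg fun a _ => abs_nonneg _
  have hCS : C * S ≤ M * Real.sqrt (N^3) := by
    rcases le_total 0 C with h | h
    · calc C * S ≤ C * Real.sqrt (N^3) := mul_le_mul_of_nonneg_left hS_le h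
        _ ≤ M * Real.sqrt (N^3) :=
          mul_le_mul_of_nonneg_right (le_max_left _ _) (Real.sqrt_nonneg _)
    · calc C * S ≤ 0 := mul_nonpos_of_nonpos_of_nonneg h hS0
        _ ≤ M * Real.sqrt (N^3) := by positivity
  have hsqrt : Real.sqrt (N^3) = N ^ ((3:ℝ)/2) := by
    rw [show N^3 = N ^ ((3:ℕ):ℝ) from (Real.rpow_natCast N 3).symm,
      Real.sqrt_eq_rpow, ← Real.rpow_mul hN0.le]
    norm_num
  have hfinal : M * Real.sqrt (N^3) < N ^ ((1+r) * (1/r)) := by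
    rw [hsqrt]
    calc M * N ^ ((3:ℝ)/2) < N ^ ε * N ^ ((3:ℝ)/2) :=
        mul_lt_mul_of_pos_right hMN (Real.rpow_pos_of_pos hN0 _)
      _ = N ^ (ε + (3:ℝ)/2) := (Real.rpow_add hN0 _ _).symm
      _ = N ^ ((1+r) * (1/r)) := by
          congr 1
          rw [hεdef]
          field_simp
          ring
  rw [hLHS] at hCineq
  linarith

end MacPhail
end

section
/- Let α ∈ ℝ and let i₁, …, i_m be elements of {1,…,n} with m ≥ 2. If for all indices (i₁,…,i_m) ∈ {1,…,n}^m one averages e^{i(m^{i₁}+⋯+m^{i_{m−1}}−(m−1)m^{i_m})α} over α ∈ [0,2π] (with normalized measure dα/2π), the result is 1 when i₁ = ⋯ = i_m and 0 otherwise. -/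
lemma arith_aux (m : ℕ) (hm : 2 ≤ m) (i : ℕ → ℕ) :
    ((∑ j ∈ Finset.Ico 1 m, (m : ℤ) ^ i j) - ((m : ℤ) - 1) * (m : ℤ) ^ i m = 0) ↔
    (∀ j ∈ Finset.Ico 1 m, i j = i m) := by
  have hm1 : (1:ℤ) < (m:ℤ) := by exact_mod_cast hm.trans_lt' one_lt_two
  constructor
  · intro h
    rw [sub_eq_zero] at h
    by_contra hc
    push_neg at hc
    obtain ⟨J, hJ, hJne⟩ := hc
    have hle : ∀ j ∈ Finset.Ico 1 m, i j ≤ i m := by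
      intro j hj
      by_contra hgt
      push_neg at hgt
      have h1 : (m:ℤ) ^ (i m + 1) ≤ (m:ℤ) ^ i j :=
        pow_le_pow_right₀ (by linarith) hgt
      have h2 : (m:ℤ) ^ i j ≤ ∑ k ∈ Finset.Ico 1 m, (m:ℤ) ^ i k :=
        Finset.single_le_sum (f := fun k => (m:ℤ) ^ i k) (fun k _ => by positivity) hj
      have h3 : (0:ℤ) < (m:ℤ) ^ i m := by positivity
      have h4 : (m:ℤ) ^ (i m + 1) = m * m ^ i m := by ring
      nlinarith
    have hlt : i J < i m := lt_of_le_of_ne (hle J hJ) hJne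
    have hsum : ∑ j ∈ Finset.Ico 1 m, (m:ℤ) ^ i j < ∑ j ∈ Finset.Ico 1 m, (m:ℤ) ^ i m := by
      apply Finset.sum_lt_sum
      · intro k hk; exact pow_le_pow_right₀ (by linarith) (hle k hk)
      · exact ⟨J, hJ, pow_lt_pow_right₀ hm1 hlt⟩
    rw [Finset.sum_const, Nat.card_Ico] at hsum
    have : ((m - 1 : ℕ) : ℤ) = (m:ℤ) - 1 := by
      have : 1 ≤ m := by omega
      push_cast [this]; ring
    rw [nsmul_eq_mul, this] at hsum
    omega
  · intro h
    rw [sub_eq_zero]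
    have : ∑ j ∈ Finset.Ico 1 m, (m:ℤ) ^ i j = ∑ j ∈ Finset.Ico 1 m, (m:ℤ) ^ i m :=
      Finset.sum_congr rfl fun j hj => by rw [h j hj]
    rw [this, Finset.sum_const, Nat.card_Ico, nsmul_eq_mul]
    have h1 : ((m - 1 : ℕ) : ℤ) = (m:ℤ) - 1 := by
      have : 1 ≤ m := by omega
      push_cast [this]; ring
    rw [h1]

open scoped Classical in
/-- Orthogonality of characters plus the arithmetic lemma: averaging
`e^{i(m^{i₁}+⋯+m^{i_{m-1}}-(m-1)m^{i_m})α}` over `α ∈ [0,2π]` gives `1` iff all `i_j` coincide,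
and `0` otherwise. -/
theorem stmt_10 (m n : ℕ) (hm : 2 ≤ m) (i : ℕ → ℕ)
    (hi : ∀ j ∈ Finset.Icc 1 m, i j ∈ Finset.Icc 1 n) :
    (1 / (2 * Real.pi) : ℂ) *
        ∫ α in (0:ℝ)..(2 * Real.pi),
          Complex.exp (Complex.I *
            ((((∑ j ∈ Finset.Ico 1 m, (m : ℤ) ^ i j) - ((m : ℤ) - 1) * (m : ℤ) ^ i m : ℤ)) : ℂ) *
            (α : ℂ))
      = if ∀ j ∈ Finset.Icc 1 m, ∀ k ∈ Finset.Icc 1 m, i j = i k then 1 else 0 := by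
  set K : ℤ := (∑ j ∈ Finset.Ico 1 m, (m : ℤ) ^ i j) - ((m : ℤ) - 1) * (m : ℤ) ^ i m with hK
  have hcond : (∀ j ∈ Finset.Icc 1 m, ∀ k ∈ Finset.Icc 1 m, i j = i k) ↔
      (∀ j ∈ Finset.Ico 1 m, i j = i m) := by
    constructor
    · intro h j hj
      have hj' : j ∈ Finset.Icc 1 m := by
        simp only [Finset.mem_Ico] at hj; simp [Finset.mem_Icc]; omega
      exact h j hj' m (by simp [Finset.mem_Icc]; omega)
    · intro h j hj k hk
      have e : ∀ l, l ∈ Finset.Icc 1 m → i l = i m := by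
        intro l hl
        rw [Finset.mem_Icc] at hl
        rcases eq_or_lt_of_le hl.2 with heq | hlt
        · rw [heq]
        · exact h l (Finset.mem_Ico.mpr ⟨hl.1, hlt⟩)
      rw [e j hj, e k hk]
  by_cases hc : ∀ j ∈ Finset.Ico 1 m, i j = i m
  · have hK0 : K = 0 := (arith_aux m hm i).mpr hc
    rw [if_pos (hcond.mpr hc), hK0]
    simp only [Int.cast_zero, mul_zero, zero_mul, Complex.exp_zero]
    rw [intervalIntegral.integral_const, sub_zero, Complex.real_smul, mul_one]
    have : (Real.pi : ℂ) ≠ 0 := by exact_mod_cast Real.pi_ne_zero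
    push_cast
    field_simp
  · have hKne : K ≠ 0 := fun h0 => hc ((arith_aux m hm i).mp h0)
    rw [if_neg (fun h => hc (hcond.mp h))]
    have hcne : Complex.I * (K : ℂ) ≠ 0 := by
      apply mul_ne_zero Complex.I_ne_zero
      exact_mod_cast hKne
    rw [integral_exp_mul_complex hcne]
    have h1 : Complex.I * (K : ℂ) * ((2 * Real.pi : ℝ) : ℂ) = (K : ℂ) * (2 * (Real.pi : ℂ) * Complex.I) := by
      push_cast; ring
    rw [h1, Complex.exp_int_mul_two_pi_mul_I, Complex.ofReal_zero, mul_zero,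
      Complex.exp_zero, sub_self, zero_div, mul_zero]
end

section
/- Fix q ≥ 2 and r ∈ (0,1). If Z is a Banach space with cotype q and m ≥ q/r, then every bounded m-linear form T : Z × ⋯ × Z → 𝕂 is absolutely (r,1)-summing: there is C with (Σ_n |T(x_n(1),…,x_n(m))|^r)^{1/r} ≤ C ω₁(x(1))⋯ω₁(x(m)) for all weakly 1-summable sequences x(j) in Z. -/
open scoped BigOperators

/-- `Z` has cotype `q`. -/
def HasCotype (Z : Type*) [NormedAddCommGroup Z] (q : ℝ) : Prop :=
  ∃ C : ℝ, 0 < C ∧ ∀ (n : ℕ) (x : Fin n → Z),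
    (∑ i, ‖x i‖ ^ q) ^ (1 / q) ≤
      C * ((∑ ε : Fin n → Bool, ‖∑ i, (if ε i then x i else -x i)‖ ^ (2 : ℝ)) / 2 ^ n)
        ^ (1 / (2 : ℝ))

/-- Weak `ℓ₁` norm of a finite family. -/
noncomputable def weakL1 {W : Type*} [NormedAddCommGroup W] [NormedSpace ℝ W]
    {n : ℕ} (x : Fin n → W) : ℝ :=
  ⨆ f : {f : W →L[ℝ] ℝ // ‖f‖ ≤ 1}, ∑ i, |f.1 (x i)|

section Aux

variable {W : Type*} [NormedAddCommGroup W] [NormedSpace ℝ W] {n : ℕ}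

lemma weakL1_bddAbove (x : Fin n → W) :
    BddAbove (Set.range fun f : {f : W →L[ℝ] ℝ // ‖f‖ ≤ 1} => ∑ i, |f.1 (x i)|) := by
  refine ⟨∑ i, ‖x i‖, ?_⟩
  rintro _ ⟨f, rfl⟩
  refine Finset.sum_le_sum fun i _ => ?_
  calc |f.1 (x i)| = ‖f.1 (x i)‖ := rfl
    _ ≤ ‖f.1‖ * ‖x i‖ := f.1.le_opNorm _
    _ ≤ 1 * ‖x i‖ := by
        exact mul_le_mul_of_nonneg_right f.2 (norm_nonneg _)
    _ = ‖x i‖ := one_mul _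

lemma sum_abs_le_weakL1 (x : Fin n → W) (f : W →L[ℝ] ℝ) (hf : ‖f‖ ≤ 1) :
    ∑ i, |f (x i)| ≤ weakL1 x :=
  le_ciSup (weakL1_bddAbove x) (⟨f, hf⟩ : {f : W →L[ℝ] ℝ // ‖f‖ ≤ 1})

lemma weakL1_nonneg (x : Fin n → W) : 0 ≤ weakL1 x := by
  have h := sum_abs_le_weakL1 x 0 (by simp)
  simpa using h

lemma sum_abs_le_weakL1_mul (x : Fin n → W) (f : W →L[ℝ] ℝ) :
    ∑ i, |f (x i)| ≤ weakL1 x * ‖f‖ := by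
  rcases eq_or_ne f 0 with rfl | hf
  · simp
  · have hpos : 0 < ‖f‖ := norm_pos_iff.mpr hf
    set g : W →L[ℝ] ℝ := ‖f‖⁻¹ • f with hg
    have hgnorm : ‖g‖ ≤ 1 := by
      rw [hg]
      refine le_trans (ContinuousLinearMap.opNorm_smul_le _ _) ?_
      rw [norm_inv, norm_norm, inv_mul_cancel₀ hpos.ne']
    have := sum_abs_le_weakL1 x g hgnorm
    have hsum : ∑ i, |g (x i)| = ‖f‖⁻¹ * ∑ i, |f (x i)| := by
      rw [Finset.mul_sum]
      refine Finset.sum_congr rfl fun i _ => ?_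
      simp [hg, abs_mul, abs_of_pos (inv_pos.mpr hpos)]
    rw [hsum] at this
    calc ∑ i, |f (x i)| = ‖f‖ * (‖f‖⁻¹ * ∑ i, |f (x i)|) := by
          field_simp
      _ ≤ ‖f‖ * weakL1 x := mul_le_mul_of_nonneg_left this hpos.le
      _ = weakL1 x * ‖f‖ := mul_comm _ _

lemma norm_signsum_le_weakL1 (x : Fin n → W) (ε : Fin n → Bool) :
    ‖∑ i, (if ε i then x i else -x i)‖ ≤ weakL1 x := by
  refine NormedSpace.norm_le_dual_bound ℝ _ (weakL1_nonneg x) fun f => ?_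
  have h1 : ‖f (∑ i, (if ε i then x i else -x i))‖ ≤ ∑ i, |f (x i)| := by
    rw [map_sum]
    refine (norm_sum_le _ _).trans (Finset.sum_le_sum fun i _ => ?_)
    by_cases h : ε i <;> simp [h, abs_le_abs, Real.norm_eq_abs]
  exact h1.trans (sum_abs_le_weakL1_mul x f)

end Aux

lemma cotype_weakL1 {Z : Type*} [NormedAddCommGroup Z] [NormedSpace ℝ Z]
    {q K : ℝ} (hK : 0 < K)
    (hZ : ∀ (n : ℕ) (x : Fin n → Z),
      (∑ i, ‖x i‖ ^ q) ^ (1 / q) ≤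
        K * ((∑ ε : Fin n → Bool, ‖∑ i, (if ε i then x i else -x i)‖ ^ (2 : ℝ)) / 2 ^ n)
          ^ (1 / (2 : ℝ)))
    (n : ℕ) (x : Fin n → Z) :
    (∑ i, ‖x i‖ ^ q) ^ (1 / q) ≤ K * weakL1 x := by
  refine (hZ n x).trans (mul_le_mul_of_nonneg_left ?_ hK.le)
  have hW := weakL1_nonneg x
  have havg : (∑ ε : Fin n → Bool, ‖∑ i, (if ε i then x i else -x i)‖ ^ (2 : ℝ)) / 2 ^ n
      ≤ weakL1 x ^ (2 : ℝ) := by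
    rw [div_le_iff₀ (by positivity)]
    calc (∑ ε : Fin n → Bool, ‖∑ i, (if ε i then x i else -x i)‖ ^ (2 : ℝ))
        ≤ ∑ _ε : Fin n → Bool, weakL1 x ^ (2 : ℝ) := by
          refine Finset.sum_le_sum fun ε _ => ?_
          exact Real.rpow_le_rpow (norm_nonneg _) (norm_signsum_le_weakL1 x ε) (by norm_num)
      _ = weakL1 x ^ (2 : ℝ) * 2 ^ n := by
          rw [Finset.sum_const]
          simp [Finset.card_univ, mul_comm]
  calc ((∑ ε : Fin n → Bool, ‖∑ i, (if ε i then x i else -x i)‖ ^ (2 : ℝ)) / 2 ^ n)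
        ^ (1 / (2 : ℝ))
      ≤ (weakL1 x ^ (2 : ℝ)) ^ (1 / (2 : ℝ)) := by
        refine Real.rpow_le_rpow ?_ havg (by norm_num)
        positivity
    _ = weakL1 x := by
        rw [← Real.rpow_mul hW]
        norm_num

/-- The key scalar inequality. -/
lemma key_ineq (q r : ℝ) (hq : 0 < q) (hr : 0 < r) {m n : ℕ} (hm : 0 < m)
    (hrm : q ≤ r * m)
    (a : Fin m → Fin n → ℝ) (ha : ∀ j i, 0 ≤ a j i)
    (c : Fin m → ℝ) (hc : ∀ j, 0 ≤ c j) (hac : ∀ j, ∑ i, a j i ^ q ≤ c j ^ q) :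
    ∑ i, ∏ j, a j i ^ r ≤ ∏ j, c j ^ r := by
  by_cases hzero : ∃ j, c j = 0
  · obtain ⟨j₀, hj₀⟩ := hzero
    have haj : ∀ i, a j₀ i = 0 := by
      intro i
      have h1 : ∑ i, a j₀ i ^ q ≤ 0 := by
        have := hac j₀
        rwa [hj₀, Real.zero_rpow hq.ne'] at this
      have h2 : a j₀ i ^ q ≤ 0 := by
        refine le_trans ?_ h1
        exact Finset.single_le_sum (fun i _ => Real.rpow_nonneg (ha j₀ i) q)
          (Finset.mem_univ i)
      have h3 : a j₀ i ^ q = 0 := le_antisymm h2 (Real.rpow_nonneg (ha j₀ i) q)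
      by_contra h
      have hpos : 0 < a j₀ i := lt_of_le_of_ne (ha j₀ i) (Ne.symm h)
      exact absurd h3 (ne_of_gt (Real.rpow_pos_of_pos hpos q))
    have hL : ∑ i, ∏ j, a j i ^ r = 0 := by
      refine Finset.sum_eq_zero fun i _ => ?_
      refine Finset.prod_eq_zero (Finset.mem_univ j₀) ?_
      rw [haj i, Real.zero_rpow hr.ne']
    rw [hL]
    exact Finset.prod_nonneg fun j _ => Real.rpow_nonneg (hc j) r
  · push_neg at hzero
    have hcpos : ∀ j, 0 < c j := fun j => lt_of_le_of_ne (hc j) (Ne.symm (hzero j))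
    set b : Fin m → Fin n → ℝ := fun j i => a j i / c j with hb
    have hbnn : ∀ j i, 0 ≤ b j i := fun j i => div_nonneg (ha j i) (hc j)
    have hb1 : ∀ j, ∑ i, b j i ^ q ≤ 1 := by
      intro j
      have : ∑ i, b j i ^ q = (∑ i, a j i ^ q) / c j ^ q := by
        rw [Finset.sum_div]
        refine Finset.sum_congr rfl fun i _ => ?_
        rw [hb, Real.div_rpow (ha j i) (hc j)]
      rw [this, div_le_one (Real.rpow_pos_of_pos (hcpos j) q)]
      exact hac j
    have hble : ∀ j i, b j i ≤ 1 := by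
      intro j i
      by_contra h
      push_neg at h
      have h1 : (1:ℝ) < b j i ^ q := by
        have := Real.rpow_lt_rpow (by norm_num : (0:ℝ) ≤ 1) h hq
        rwa [Real.one_rpow] at this
      have h2 : b j i ^ q ≤ 1 := by
        refine le_trans ?_ (hb1 j)
        exact Finset.single_le_sum (fun i _ => Real.rpow_nonneg (hbnn j i) q)
          (Finset.mem_univ i)
      linarith
    -- pointwise AM-GM
    have hpt : ∀ i, ∏ j, b j i ^ r ≤ (1 / m) * ∑ j, b j i ^ q := by
      intro i
      have hAM : ∏ j, (b j i ^ (r * m)) ^ ((1 : ℝ) / m) ≤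
          ∑ j : Fin m, (1 / (m : ℝ)) * b j i ^ (r * m) := by
        refine Real.geom_mean_le_arith_mean_weighted Finset.univ _ _
          (fun j _ => by positivity) ?_ (fun j _ => Real.rpow_nonneg (hbnn j i) _)
        rw [Finset.sum_const, Finset.card_univ, Fintype.card_fin, nsmul_eq_mul]
        field_simp
      have hL : ∀ j, (b j i ^ (r * m)) ^ ((1 : ℝ) / m) = b j i ^ r := by
        intro j
        rw [← Real.rpow_mul (hbnn j i)]
        congr 1
        field_simp
      have hR : ∀ j, b j i ^ (r * m) ≤ b j i ^ q := by
        intro j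
        rcases eq_or_lt_of_le (hbnn j i) with h0 | h0
        · rw [← h0, Real.zero_rpow (by positivity : (0:ℝ) < r * m).ne',
            Real.zero_rpow hq.ne']
        · exact Real.rpow_le_rpow_of_exponent_ge h0 (hble j i) hrm
      calc ∏ j, b j i ^ r = ∏ j, (b j i ^ (r * m)) ^ ((1 : ℝ) / m) := by
            exact Finset.prod_congr rfl fun j _ => (hL j).symm
        _ ≤ ∑ j : Fin m, (1 / (m : ℝ)) * b j i ^ (r * m) := hAM
        _ ≤ ∑ j : Fin m, (1 / (m : ℝ)) * b j i ^ q := by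
            refine Finset.sum_le_sum fun j _ => ?_
            exact mul_le_mul_of_nonneg_left (hR j) (by positivity)
        _ = (1 / m) * ∑ j, b j i ^ q := by rw [Finset.mul_sum]
    have hsum : ∑ i, ∏ j, b j i ^ r ≤ 1 := by
      calc ∑ i, ∏ j, b j i ^ r ≤ ∑ i, (1 / m) * ∑ j, b j i ^ q :=
            Finset.sum_le_sum fun i _ => hpt i
        _ = (1 / m) * ∑ j, ∑ i, b j i ^ q := by
            rw [← Finset.mul_sum, Finset.sum_comm]
        _ ≤ (1 / m) * ∑ _j : Fin m, (1:ℝ) := by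
            refine mul_le_mul_of_nonneg_left (Finset.sum_le_sum fun j _ => hb1 j)
              (by positivity)
        _ = 1 := by
            rw [Finset.sum_const, Finset.card_univ, Fintype.card_fin, nsmul_eq_mul]
            field_simp
    have hfact : ∀ i, ∏ j, a j i ^ r = (∏ j, c j ^ r) * ∏ j, b j i ^ r := by
      intro i
      rw [← Finset.prod_mul_distrib]
      refine Finset.prod_congr rfl fun j _ => ?_
      rw [← Real.mul_rpow (hc j) (hbnn j i)]
      congr 1
      show a j i = c j * (a j i / c j)
      rw [mul_comm]
      exact (div_mul_cancel₀ (a j i) (hzero j)).symm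
    calc ∑ i, ∏ j, a j i ^ r = (∏ j, c j ^ r) * ∑ i, ∏ j, b j i ^ r := by
          rw [Finset.mul_sum]
          exact Finset.sum_congr rfl fun i _ => hfact i
      _ ≤ (∏ j, c j ^ r) * 1 := by
          refine mul_le_mul_of_nonneg_left hsum ?_
          exact Finset.prod_nonneg fun j _ => Real.rpow_nonneg (hc j) r
      _ = ∏ j, c j ^ r := mul_one _

/-- Botelho: if `Z` has cotype `q` and `m ≥ q/r` with `0 < r < 1`, then every bounded
`m`-linear form on `Z^m` is absolutely `(r,1)`-summing. -/
theorem stmt_15 (q r : ℝ) (hq : 2 ≤ q) (hr0 : 0 < r) (hr1 : r < 1)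
    (Z : Type*) [NormedAddCommGroup Z] [NormedSpace ℝ Z] [CompleteSpace Z]
    (hZ : HasCotype Z q) (m : ℕ) (hm : q / r ≤ (m : ℝ))
    (T : ContinuousMultilinearMap ℝ (fun _ : Fin m => Z) ℝ) :
    ∃ C : ℝ, 0 < C ∧ ∀ (n : ℕ) (x : Fin m → Fin n → Z),
      (∑ i : Fin n, ‖T (fun j => x j i)‖ ^ r) ^ (1 / r) ≤ C * ∏ j, weakL1 (x j) := by
  obtain ⟨K, hK, hcot⟩ := hZ
  have hq0 : (0:ℝ) < q := by linarith
  have hmpos : 0 < (m:ℝ) := lt_of_lt_of_le (by positivity) hm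
  have hm0 : 0 < m := by exact_mod_cast hmpos
  have hrm : q ≤ r * m := by
    rw [div_le_iff₀ hr0] at hm
    linarith [hm]
  refine ⟨(‖T‖ + 1) * K ^ m, by positivity, fun n x => ?_⟩
  set c : Fin m → ℝ := fun j => K * weakL1 (x j) with hc
  have hcnn : ∀ j, 0 ≤ c j := fun j => mul_nonneg hK.le (weakL1_nonneg (x j))
  have hac : ∀ j, ∑ i, ‖x j i‖ ^ q ≤ c j ^ q := by
    intro j
    have h1 : (∑ i, ‖x j i‖ ^ q) ^ (1 / q) ≤ c j := cotype_weakL1 hK hcot n (x j)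
    have hS : (0:ℝ) ≤ ∑ i, ‖x j i‖ ^ q :=
      Finset.sum_nonneg fun i _ => Real.rpow_nonneg (norm_nonneg _) q
    have h2 := Real.rpow_le_rpow (Real.rpow_nonneg hS _) h1 hq0.le
    rwa [← Real.rpow_mul hS, one_div, inv_mul_cancel₀ hq0.ne', Real.rpow_one] at h2
  have hkey : ∑ i, ∏ j, ‖x j i‖ ^ r ≤ ∏ j, c j ^ r :=
    key_ineq q r hq0 hr0 hm0 hrm (fun j i => ‖x j i‖) (fun j i => norm_nonneg _)
      c hcnn hac
  have hstep : ∑ i : Fin n, ‖T (fun j => x j i)‖ ^ r ≤ (‖T‖ * ∏ j, c j) ^ r := by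
    calc ∑ i : Fin n, ‖T (fun j => x j i)‖ ^ r
        ≤ ∑ i : Fin n, ‖T‖ ^ r * ∏ j, ‖x j i‖ ^ r := by
          refine Finset.sum_le_sum fun i _ => ?_
          have h1 : ‖T (fun j => x j i)‖ ≤ ‖T‖ * ∏ j, ‖x j i‖ := T.le_opNorm _
          have h2 := Real.rpow_le_rpow (norm_nonneg _) h1 hr0.le
          refine h2.trans_eq ?_
          rw [Real.mul_rpow (norm_nonneg T) (Finset.prod_nonneg fun j _ => norm_nonneg _),
            ← Real.finset_prod_rpow _ _ (fun j _ => norm_nonneg _)]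
      _ = ‖T‖ ^ r * ∑ i, ∏ j, ‖x j i‖ ^ r := by rw [← Finset.mul_sum]
      _ ≤ ‖T‖ ^ r * ∏ j, c j ^ r := by
          exact mul_le_mul_of_nonneg_left hkey (Real.rpow_nonneg (norm_nonneg T) r)
      _ = (‖T‖ * ∏ j, c j) ^ r := by
          rw [Real.mul_rpow (norm_nonneg T) (Finset.prod_nonneg fun j _ => hcnn j),
            ← Real.finset_prod_rpow _ _ (fun j _ => hcnn j)]
  have hA : (0:ℝ) ≤ ‖T‖ * ∏ j, c j :=
    mul_nonneg (norm_nonneg T) (Finset.prod_nonneg fun j _ => hcnn j)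
  have hfin : (∑ i : Fin n, ‖T (fun j => x j i)‖ ^ r) ^ (1 / r) ≤ ‖T‖ * ∏ j, c j := by
    have hS : (0:ℝ) ≤ ∑ i : Fin n, ‖T (fun j => x j i)‖ ^ r :=
      Finset.sum_nonneg fun i _ => Real.rpow_nonneg (norm_nonneg _) r
    have := Real.rpow_le_rpow hS hstep (by positivity : (0:ℝ) ≤ 1 / r)
    rwa [← Real.rpow_mul hA, mul_one_div, div_self hr0.ne', Real.rpow_one] at this
  refine hfin.trans ?_
  have hprod : ∏ j, c j = K ^ m * ∏ j, weakL1 (x j) := by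
    rw [hc, Finset.prod_mul_distrib, Finset.prod_const, Finset.card_univ, Fintype.card_fin]
  rw [hprod]
  have hWnn : (0:ℝ) ≤ ∏ j, weakL1 (x j) :=
    Finset.prod_nonneg fun j _ => weakL1_nonneg (x j)
  calc ‖T‖ * (K ^ m * ∏ j, weakL1 (x j))
      ≤ (‖T‖ + 1) * (K ^ m * ∏ j, weakL1 (x j)) := by
        refine mul_le_mul_of_nonneg_right (by linarith) ?_
        positivity
    _ = (‖T‖ + 1) * K ^ m * ∏ j, weakL1 (x j) := by ring
end

section
/- Let m ≥ p ≥ 2 and r > 0. Every bounded m-linear form on ℓ_p × ⋯ × ℓ_p is absolutely (r,1)-summing if and only if r ≥ p/m. -/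
set_option maxHeartbeats 1000000

open scoped BigOperators

section W
variable {W : Type*} [NormedAddCommGroup W] [NormedSpace ℝ W] {n : ℕ}

instance : Nonempty {f : W →L[ℝ] ℝ // ‖f‖ ≤ 1} := ⟨⟨0, by simp⟩⟩

lemma weakL1_le (x : Fin n → W) {c : ℝ}
    (h : ∀ f : W →L[ℝ] ℝ, ‖f‖ ≤ 1 → ∑ i, |f (x i)| ≤ c) : weakL1 x ≤ c :=
  ciSup_le fun f => h f.1 f.2

lemma norm_sum_smul_le_weakL1 (x : Fin n → W) (ε : Fin n → ℝ) (hε : ∀ i, |ε i| ≤ 1) :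
    ‖∑ i, ε i • x i‖ ≤ weakL1 x := by
  set z := ∑ i, ε i • x i with hz
  rcases eq_or_ne z 0 with h | h
  · rw [h, norm_zero]; exact weakL1_nonneg x
  obtain ⟨g, hg1, hgz⟩ := exists_dual_vector ℝ z (norm_ne_zero_iff.2 h)
  have : ‖z‖ = g z := by simpa using hgz.symm
  rw [this, hz, map_sum]
  calc ∑ i, g (ε i • x i) ≤ ∑ i, |g (x i)| := by
        refine Finset.sum_le_sum fun i _ => ?_
        rw [map_smul, smul_eq_mul]
        calc ε i * g (x i) ≤ |ε i * g (x i)| := le_abs_self _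
          _ = |ε i| * |g (x i)| := abs_mul _ _
          _ ≤ 1 * |g (x i)| := by
              exact mul_le_mul_of_nonneg_right (hε i) (abs_nonneg _)
          _ = |g (x i)| := one_mul _
    _ ≤ weakL1 x := sum_abs_le_weakL1 x g hg1.le

end W

section scalar

/-- superadditivity of rpow on finite sums -/
lemma sum_rpow_le_rpow_sum' {ι : Type*} (s : Finset ι) (b : ι → ℝ) (hb : ∀ i ∈ s, 0 ≤ b i)
    {t : ℝ} (ht : 1 ≤ t) : ∑ i ∈ s, b i ^ t ≤ (∑ i ∈ s, b i) ^ t := by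
  classical
  induction s using Finset.induction with
  | empty => simp [Real.zero_rpow (by linarith : t ≠ 0)]
  | insert _ _ hnot ih =>
    rename_i a s'
    rw [Finset.sum_insert hnot, Finset.sum_insert hnot]
    have hb' : ∀ i ∈ s', 0 ≤ b i := fun i hi => hb i (Finset.mem_insert_of_mem hi)
    have ha : 0 ≤ b a := hb a (Finset.mem_insert_self a s')
    have hs : 0 ≤ ∑ i ∈ s', b i := Finset.sum_nonneg hb'
    have h2 : b a ^ t + (∑ i ∈ s', b i) ^ t ≤ (b a + ∑ i ∈ s', b i) ^ t := by
      have := NNReal.add_rpow_le_rpow_add ⟨b a, ha⟩ ⟨_, hs⟩ ht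
      have h3 := NNReal.coe_le_coe.2 this
      push_cast [NNReal.coe_rpow] at h3
      exact h3
    calc b a ^ t + ∑ i ∈ s', b i ^ t ≤ b a ^ t + (∑ i ∈ s', b i) ^ t := by
          exact add_le_add_right (ih hb') _
      _ ≤ _ := h2

/-- sign orthogonality -/
lemma rademacher_orth {n : ℕ} (c : Fin n → ℝ) :
    ∑ ε : Fin n → Bool, (∑ i, c i * (if ε i then (1:ℝ) else -1)) ^ 2
      = 2 ^ n * ∑ i, c i ^ 2 := by
  classical
  have key : ∀ i j : Fin n,
      (∑ ε : Fin n → Bool, (if ε i then (1:ℝ) else -1) * (if ε j then (1:ℝ) else -1))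
        = if i = j then (2:ℝ) ^ n else 0 := by
    intro i j
    by_cases hij : i = j
    · subst hij
      simp only [if_pos rfl]
      have : ∀ ε : Fin n → Bool, (if ε i then (1:ℝ) else -1) * (if ε i then (1:ℝ) else -1) = 1 := by
        intro ε; by_cases h : ε i <;> simp [h]
      rw [Finset.sum_congr rfl fun ε _ => this ε]
      simp [Finset.card_univ]
    · rw [if_neg hij]
      refine Finset.sum_involution (fun ε _ => Function.update ε i (!ε i)) ?_ ?_ ?_ ?_
      · intro ε _
        show ((if ε i then (1:ℝ) else -1) * (if ε j then (1:ℝ) else -1)) +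
          ((if Function.update ε i (!ε i) i then (1:ℝ) else -1) *
            (if Function.update ε i (!ε i) j then (1:ℝ) else -1)) = 0
        have h1 : Function.update ε i (!ε i) i = !ε i := Function.update_self _ _ _
        have h2 : Function.update ε i (!ε i) j = ε j := Function.update_of_ne (Ne.symm hij) _ _
        rw [h1, h2]
        by_cases h : ε i <;> by_cases h' : ε j <;> simp [h, h'] <;> ring
      · intro ε _ _
        intro hcon
        have hcon' : Function.update ε i (!ε i) = ε := hcon
        have := congrFun hcon' i
        rw [Function.update_self] at this
        exact (Bool.not_ne_self (ε i)) this
      · intro ε _; exact Finset.mem_univ _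
      · intro ε _
        funext k
        by_cases hk : k = i
        · subst hk; simp [Function.update_self]
        · simp [Function.update_of_ne hk]
  calc ∑ ε : Fin n → Bool, (∑ i, c i * (if ε i then (1:ℝ) else -1)) ^ 2
      = ∑ ε : Fin n → Bool, ∑ i, ∑ j, (c i * c j) *
          ((if ε i then (1:ℝ) else -1) * (if ε j then (1:ℝ) else -1)) := by
        refine Finset.sum_congr rfl fun ε _ => ?_
        rw [sq, Finset.sum_mul_sum]
        refine Finset.sum_congr rfl fun i _ => Finset.sum_congr rfl fun j _ => ?_
        ring
    _ = ∑ i, ∑ j, (c i * c j) *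
          (∑ ε : Fin n → Bool, (if ε i then (1:ℝ) else -1) * (if ε j then (1:ℝ) else -1)) := by
        rw [Finset.sum_comm]
        refine Finset.sum_congr rfl fun i _ => ?_
        rw [Finset.sum_comm]
        refine Finset.sum_congr rfl fun j _ => ?_
        rw [Finset.mul_sum]
    _ = ∑ i, ∑ j, (c i * c j) * (if i = j then (2:ℝ) ^ n else 0) := by
        refine Finset.sum_congr rfl fun i _ => Finset.sum_congr rfl fun j _ => ?_
        rw [key i j]
    _ = 2 ^ n * ∑ i, c i ^ 2 := by
        rw [Finset.mul_sum]
        refine Finset.sum_congr rfl fun i _ => ?_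
        have : (∑ j, c i * c j * if i = j then (2:ℝ) ^ n else 0)
            = ∑ j, if i = j then c i * c j * (2:ℝ) ^ n else 0 := by
          refine Finset.sum_congr rfl fun j _ => ?_
          by_cases h : i = j <;> simp [h]
        rw [this, Finset.sum_ite_eq Finset.univ i (fun j => c i * c j * (2:ℝ) ^ n)]
        simp [sq]; ring
end scalar

lemma sq_rpow_half (q : ℝ) (a : ℝ) : (a ^ 2) ^ (q / 2) = |a| ^ q := by
  rw [← sq_abs, ← Real.rpow_natCast |a| 2, ← Real.rpow_mul (abs_nonneg a)]
  norm_num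
  ring_nf

/-- scalar Khintchine-type lower estimate, q ≥ 2 -/
lemma khintchine_scalar {n : ℕ} (c : Fin n → ℝ) {q : ℝ} (hq : 2 ≤ q) :
    ∑ i, |c i| ^ q ≤ ((2:ℝ) ^ n)⁻¹ *
      ∑ ε : Fin n → Bool, |∑ i, c i * (if ε i then (1:ℝ) else -1)| ^ q := by
  have h2n : (0:ℝ) < 2 ^ n := by positivity
  have hq2 : (1:ℝ) ≤ q / 2 := by linarith
  have hcard : ∑ _ε : Fin n → Bool, ((2:ℝ) ^ n)⁻¹ = 1 := by
    rw [Finset.sum_const]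
    simp [Finset.card_univ, Fintype.card_fun]
  calc ∑ i, |c i| ^ q = ∑ i, (c i ^ 2) ^ (q / 2) := by
        refine Finset.sum_congr rfl fun i _ => (sq_rpow_half q (c i)).symm
    _ ≤ (∑ i, c i ^ 2) ^ (q / 2) :=
        sum_rpow_le_rpow_sum' _ _ (fun i _ => sq_nonneg _) hq2
    _ = (∑ ε : Fin n → Bool, ((2:ℝ) ^ n)⁻¹ *
          (∑ i, c i * (if ε i then (1:ℝ) else -1)) ^ 2) ^ (q / 2) := by
        rw [← Finset.mul_sum, rademacher_orth c, ← mul_assoc, inv_mul_cancel₀ h2n.ne', one_mul]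
    _ ≤ ∑ ε : Fin n → Bool, ((2:ℝ) ^ n)⁻¹ *
          ((∑ i, c i * (if ε i then (1:ℝ) else -1)) ^ 2) ^ (q / 2) :=
        Real.rpow_arith_mean_le_arith_mean_rpow _ _ _
          (fun _ _ => by positivity) hcard (fun _ _ => sq_nonneg _) hq2
    _ = ((2:ℝ) ^ n)⁻¹ * ∑ ε : Fin n → Bool,
          |∑ i, c i * (if ε i then (1:ℝ) else -1)| ^ q := by
        rw [Finset.mul_sum]
        exact Finset.sum_congr rfl fun ε _ => by rw [sq_rpow_half]

section lp
variable {p : ℝ} [Fact (1 ≤ ENNReal.ofReal p)]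

local notation "E" => lp (fun _ : ℕ => ℝ) (ENNReal.ofReal p)

lemma toReal_ofReal_p (hp : 2 ≤ p) : (ENNReal.ofReal p).toReal = p :=
  ENNReal.toReal_ofReal (by linarith)

lemma coord_summable (hp : 2 ≤ p) (f : E) : Summable fun k : ℕ => ‖(f : ℕ → ℝ) k‖ ^ p := by
  have h := (lp.memℓp f).summable (p := ENNReal.ofReal p)
    (by rw [toReal_ofReal_p hp]; linarith)
  rwa [toReal_ofReal_p hp] at h

lemma norm_rpow_coords (hp : 2 ≤ p) (f : E) : ‖f‖ ^ p = ∑' k : ℕ, ‖(f : ℕ → ℝ) k‖ ^ p := by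
  have h := lp.norm_rpow_eq_tsum (p := ENNReal.ofReal p)
    (by rw [toReal_ofReal_p hp]; linarith) f
  rwa [toReal_ofReal_p hp] at h

/-- cotype-p-type inequality for `ℓ_p`, `p ≥ 2`, with constant 1. -/
lemma cotype_lp (hp : 2 ≤ p) {n : ℕ} (x : Fin n → E) :
    ∑ i, ‖x i‖ ^ p ≤ weakL1 x ^ p := by
  classical
  have hp0 : (0:ℝ) < p := by linarith
  set z : (Fin n → Bool) → E := fun ε => ∑ i, (if ε i then (1:ℝ) else -1) • x i with hzdef
  have hz : ∀ (ε : Fin n → Bool) (k : ℕ),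
      (z ε : ℕ → ℝ) k = ∑ i, (x i : ℕ → ℝ) k * (if ε i then (1:ℝ) else -1) := by
    intro ε k
    rw [hzdef]
    simp only [lp.coeFn_sum, Finset.sum_apply, lp.coeFn_smul, Pi.smul_apply, smul_eq_mul]
    exact Finset.sum_congr rfl fun i _ => mul_comm _ _
  have hzsum : ∀ ε : Fin n → Bool, Summable fun k : ℕ => ‖(z ε : ℕ → ℝ) k‖ ^ p :=
    fun ε => coord_summable hp (z ε)
  have hRHSsummable : Summable fun k : ℕ =>
      ((2:ℝ) ^ n)⁻¹ * ∑ ε : Fin n → Bool, ‖(z ε : ℕ → ℝ) k‖ ^ p :=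
    (summable_sum (fun ε _ => hzsum ε)).mul_left _
  have hLHSsummable : Summable fun k : ℕ => ∑ i, ‖(x i : ℕ → ℝ) k‖ ^ p :=
    summable_sum (fun i _ => coord_summable hp (x i))
  have pointwise : ∀ k : ℕ, ∑ i, ‖(x i : ℕ → ℝ) k‖ ^ p ≤
      ((2:ℝ) ^ n)⁻¹ * ∑ ε : Fin n → Bool, ‖(z ε : ℕ → ℝ) k‖ ^ p := by
    intro k
    have h := khintchine_scalar (fun i => (x i : ℕ → ℝ) k) hp
    simp only [Real.norm_eq_abs]
    refine h.trans (le_of_eq ?_)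
    congr 1
    refine Finset.sum_congr rfl fun ε _ => ?_
    rw [hz ε k]
  calc ∑ i, ‖x i‖ ^ p = ∑ i, ∑' k : ℕ, ‖(x i : ℕ → ℝ) k‖ ^ p :=
        Finset.sum_congr rfl fun i _ => norm_rpow_coords hp (x i)
    _ = ∑' k : ℕ, ∑ i, ‖(x i : ℕ → ℝ) k‖ ^ p :=
        (Summable.tsum_finsetSum (fun i _ => coord_summable hp (x i))).symm
    _ ≤ ∑' k : ℕ, ((2:ℝ) ^ n)⁻¹ * ∑ ε : Fin n → Bool, ‖(z ε : ℕ → ℝ) k‖ ^ p :=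
        Summable.tsum_le_tsum pointwise hLHSsummable hRHSsummable
    _ = ((2:ℝ) ^ n)⁻¹ * ∑ ε : Fin n → Bool, ∑' k : ℕ, ‖(z ε : ℕ → ℝ) k‖ ^ p := by
        rw [tsum_mul_left, Summable.tsum_finsetSum (fun ε _ => hzsum ε)]
    _ = ((2:ℝ) ^ n)⁻¹ * ∑ ε : Fin n → Bool, ‖z ε‖ ^ p := by
        rw [Finset.sum_congr rfl fun ε _ => (norm_rpow_coords hp (z ε)).symm]
    _ ≤ ((2:ℝ) ^ n)⁻¹ * ∑ _ε : Fin n → Bool, weakL1 x ^ p := by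
        refine mul_le_mul_of_nonneg_left (Finset.sum_le_sum fun ε _ => ?_) (by positivity)
        refine Real.rpow_le_rpow (norm_nonneg _) ?_ hp0.le
        refine norm_sum_smul_le_weakL1 x _ fun i => ?_
        by_cases h : ε i <;> simp [h]
    _ = weakL1 x ^ p := by
        rw [Finset.sum_const]
        simp only [Finset.card_univ, Fintype.card_fun, Fintype.card_bool, Fintype.card_fin,
          nsmul_eq_mul, Nat.cast_pow, Nat.cast_ofNat]
        rw [← mul_assoc, inv_mul_cancel₀ (by positivity : ((2:ℝ)^n) ≠ 0), one_mul]

/-- Main inductive inequality: uniformly bounded families of `k`-linear forms on `ℓ_p`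
are "absolutely `(p/k,1)`-summing along the diagonal" with constant 1. -/
lemma lemD (hp : 2 ≤ p) : ∀ k : ℕ, 1 ≤ k →
    ∀ (n : ℕ) (S : Fin n → ContinuousMultilinearMap ℝ (fun _ : Fin k => E) ℝ) (M : ℝ),
      0 ≤ M → (∀ i, ‖S i‖ ≤ M) → ∀ x : Fin k → Fin n → E,
      ∑ i, |S i (fun j => x j i)| ^ (p / (k:ℝ)) ≤
        (M * ∏ j, weakL1 (x j)) ^ (p / (k:ℝ)) := by
  have hp0 : (0:ℝ) < p := by linarith
  intro k hk
  induction k, hk using Nat.le_induction with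
  | base =>
    intro n S M hM0 hM x
    simp only [Nat.cast_one, div_one]
    have step1 : ∀ i : Fin n, |S i (fun j => x j i)| ^ p ≤ (M * ‖x 0 i‖) ^ p := by
      intro i
      refine Real.rpow_le_rpow (abs_nonneg _) ?_ hp0.le
      have h1 : |S i (fun j => x j i)| ≤ ‖S i‖ * ∏ j, ‖x j i‖ := (S i).le_opNorm _
      have h2 : (∏ j : Fin 1, ‖x j i‖) = ‖x 0 i‖ := Fin.prod_univ_one _
      rw [h2] at h1
      refine h1.trans ?_
      exact mul_le_mul_of_nonneg_right (hM i) (norm_nonneg _)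
    calc ∑ i, |S i (fun j => x j i)| ^ p ≤ ∑ i, (M * ‖x 0 i‖) ^ p :=
          Finset.sum_le_sum fun i _ => step1 i
      _ = M ^ p * ∑ i, ‖x 0 i‖ ^ p := by
          rw [Finset.mul_sum]
          exact Finset.sum_congr rfl fun i _ =>
            Real.mul_rpow hM0 (norm_nonneg _)
      _ ≤ M ^ p * weakL1 (x 0) ^ p := by
          exact mul_le_mul_of_nonneg_left (cotype_lp hp (x 0)) (Real.rpow_nonneg hM0 _)
      _ = (M * ∏ j, weakL1 (x j)) ^ p := by
          rw [Fin.prod_univ_one, ← Real.mul_rpow hM0 (weakL1_nonneg _)]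
  | succ k hk IH =>
    intro n S M hM0 hM x
    classical
    push_cast
    set s : ℝ := p / ((k:ℝ) + 1) with hs
    have hk1 : (1:ℝ) ≤ (k:ℝ) := by exact_mod_cast hk
    have hkpos : (0:ℝ) < (k:ℝ) := by linarith
    have hk1pos : (0:ℝ) < (k:ℝ) + 1 := by linarith
    -- normalized curried forms
    set S' : Fin n → ContinuousMultilinearMap ℝ (fun _ : Fin k => E) ℝ :=
      fun i => if _h : x 0 i = 0 then 0
        else (‖x 0 i‖⁻¹ : ℝ) • ((S i).curryLeft (x 0 i)) with hS'def
    have hcnn : ∀ i : Fin n, 0 ≤ ‖x 0 i‖ := fun i => norm_nonneg _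
    have hdnn : ∀ i : Fin n, 0 ≤ |S' i (fun j => x j.succ i)| := fun i => abs_nonneg _
    have hcons : ∀ i : Fin n,
        (Fin.cons (x 0 i) (fun j : Fin k => x j.succ i) : Fin (k+1) → E)
          = fun j => x j i := fun i => Fin.cons_self_tail (fun j => x j i)
    have key1 : ∀ i, |S i (fun j => x j i)| = ‖x 0 i‖ * |S' i (fun j => x j.succ i)| := by
      intro i
      by_cases h : x 0 i = 0
      · have h0 : S i (fun j => x j i) = 0 :=
          (S i).map_coord_zero (m := fun j => x j i) 0 h
        simp [h0, h]
      · have hpos : (0:ℝ) < ‖x 0 i‖ := norm_pos_iff.2 h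
        have hval : S' i (fun j => x j.succ i)
            = ‖x 0 i‖⁻¹ * S i (fun j => x j i) := by
          rw [hS'def]
          simp only [dif_neg h]
          rw [ContinuousMultilinearMap.smul_apply]
          rw [ContinuousMultilinearMap.curryLeft_apply, hcons i]
          simp [smul_eq_mul]
        rw [hval, abs_mul, abs_inv, abs_norm]
        rw [← mul_assoc, mul_inv_cancel₀ hpos.ne', one_mul]
    have key2 : ∀ i, ‖S' i‖ ≤ M := by
      intro i
      by_cases h : x 0 i = 0
      · rw [hS'def]; simp only [dif_pos h]; simpa using hM0
      · have hpos : (0:ℝ) < ‖x 0 i‖ := norm_pos_iff.2 h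
        rw [hS'def]; simp only [dif_neg h]
        refine ContinuousMultilinearMap.opNorm_le_bound hM0 fun y => ?_
        rw [ContinuousMultilinearMap.smul_apply, ContinuousMultilinearMap.curryLeft_apply]
        have hprod : (∏ j : Fin (k+1), ‖(Fin.cons (x 0 i) y : Fin (k+1) → E) j‖)
            = ‖x 0 i‖ * ∏ j : Fin k, ‖y j‖ := by
          rw [Fin.prod_univ_succ]
          simp [Fin.cons_zero, Fin.cons_succ]
        have hb := (S i).le_opNorm (Fin.cons (x 0 i) y)
        rw [hprod] at hb
        have : ‖(‖x 0 i‖⁻¹ : ℝ) • S i (Fin.cons (x 0 i) y)‖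
            = ‖x 0 i‖⁻¹ * ‖S i (Fin.cons (x 0 i) y)‖ := by
          rw [norm_smul]; simp
        rw [this]
        have h2 : ‖x 0 i‖⁻¹ * ‖S i (Fin.cons (x 0 i) y)‖
            ≤ ‖x 0 i‖⁻¹ * (‖S i‖ * (‖x 0 i‖ * ∏ j : Fin k, ‖y j‖)) :=
          mul_le_mul_of_nonneg_left hb (by positivity)
        refine h2.trans ?_
        have h3 : ‖x 0 i‖⁻¹ * (‖S i‖ * (‖x 0 i‖ * ∏ j : Fin k, ‖y j‖))
            = ‖S i‖ * ∏ j : Fin k, ‖y j‖ := by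
          field_simp
        rw [h3]
        exact mul_le_mul_of_nonneg_right (hM i)
          (Finset.prod_nonneg fun j _ => norm_nonneg _)
    -- apply IH and cotype
    have hdsum : ∑ i, |S' i (fun j => x j.succ i)| ^ (p / (k:ℝ)) ≤
        (M * ∏ j : Fin k, weakL1 (x j.succ)) ^ (p / (k:ℝ)) :=
      IH n S' M hM0 key2 (fun j => x j.succ)
    have hcsum : ∑ i, ‖x 0 i‖ ^ p ≤ weakL1 (x 0) ^ p := cotype_lp hp (x 0)
    -- Hölder
    have hconj : Real.HolderConjugate ((k:ℝ) + 1) (((k:ℝ) + 1) / (k:ℝ)) := by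
      rw [Real.holderConjugate_iff]; constructor
      · linarith
      · rw [inv_div]
        field_simp
        ring
    have holder := Real.inner_le_Lp_mul_Lq_of_nonneg (Finset.univ)
      (f := fun i => ‖x 0 i‖ ^ s) (g := fun i => |S' i (fun j => x j.succ i)| ^ s) hconj
      (fun i _ => Real.rpow_nonneg (hcnn i) _)
      (fun i _ => Real.rpow_nonneg (hdnn i) _)
    have hexp1 : ∀ i : Fin n, (‖x 0 i‖ ^ s) ^ ((k:ℝ) + 1) = ‖x 0 i‖ ^ p := by
      intro i
      rw [← Real.rpow_mul (hcnn i)]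
      congr 1
      rw [hs]; field_simp
    have hexp2 : ∀ i : Fin n, (|S' i (fun j => x j.succ i)| ^ s) ^ (((k:ℝ) + 1) / (k:ℝ)) = |S' i (fun j => x j.succ i)| ^ (p / (k:ℝ)) := by
      intro i
      rw [← Real.rpow_mul (hdnn i)]
      congr 1
      rw [hs]
      field_simp
    rw [Finset.sum_congr rfl (fun i _ => hexp1 i),
        Finset.sum_congr rfl (fun i _ => hexp2 i)] at holder
    -- assemble
    have hLHS : ∑ i, |S i (fun j => x j i)| ^ s
        = ∑ i, (‖x 0 i‖ ^ s) * (|S' i (fun j => x j.succ i)| ^ s) := by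
      refine Finset.sum_congr rfl fun i _ => ?_
      rw [key1 i, Real.mul_rpow (hcnn i) (hdnn i)]
    have hstep : (∑ i, ‖x 0 i‖ ^ p) ^ (1 / ((k:ℝ) + 1)) *
          (∑ i, |S' i (fun j => x j.succ i)| ^ (p / (k:ℝ))) ^ (1 / (((k:ℝ) + 1) / (k:ℝ)))
        ≤ (weakL1 (x 0) ^ p) ^ (1 / ((k:ℝ) + 1)) *
          ((M * ∏ j : Fin k, weakL1 (x j.succ)) ^ (p / (k:ℝ))) ^ (1 / (((k:ℝ) + 1) / (k:ℝ))) := by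
      refine mul_le_mul ?_ ?_ (Real.rpow_nonneg (Finset.sum_nonneg fun i _ =>
        Real.rpow_nonneg (hdnn i) _) _) (Real.rpow_nonneg (Real.rpow_nonneg
        (weakL1_nonneg _) _) _)
      · exact Real.rpow_le_rpow (Finset.sum_nonneg fun i _ =>
          Real.rpow_nonneg (hcnn i) _) hcsum (by positivity)
      · exact Real.rpow_le_rpow (Finset.sum_nonneg fun i _ =>
          Real.rpow_nonneg (hdnn i) _) hdsum (by positivity)
    have hMw : 0 ≤ M * ∏ j : Fin k, weakL1 (x j.succ) :=
      mul_nonneg hM0 (Finset.prod_nonneg fun j _ => weakL1_nonneg _)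
    have hfin1 : (weakL1 (x 0) ^ p) ^ (1 / ((k:ℝ) + 1)) = weakL1 (x 0) ^ s := by
      rw [← Real.rpow_mul (weakL1_nonneg _), hs]
      congr 1
      field_simp
    have hfin2 : ((M * ∏ j : Fin k, weakL1 (x j.succ)) ^ (p / (k:ℝ)))
          ^ (1 / (((k:ℝ) + 1) / (k:ℝ)))
        = (M * ∏ j : Fin k, weakL1 (x j.succ)) ^ s := by
      rw [← Real.rpow_mul hMw, hs]
      congr 1
      field_simp
    have hfin3 : weakL1 (x 0) ^ s * (M * ∏ j : Fin k, weakL1 (x j.succ)) ^ s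
        = (M * ∏ j : Fin (k+1), weakL1 (x j)) ^ s := by
      rw [← Real.mul_rpow (weakL1_nonneg _) hMw]
      congr 1
      rw [Fin.prod_univ_succ]
      ring
    calc ∑ i, |S i (fun j => x j i)| ^ s
        = ∑ i, (‖x 0 i‖ ^ s) * (|S' i (fun j => x j.succ i)| ^ s) := hLHS
      _ ≤ _ := holder
      _ ≤ _ := hstep
      _ = (M * ∏ j : Fin (k+1), weakL1 (x j)) ^ s := by rw [hfin1, hfin2, hfin3]

lemma lnorm_mono {n : ℕ} (a : Fin n → ℝ) (ha : ∀ i, 0 ≤ a i) {s r : ℝ}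
    (hs : 0 < s) (hsr : s ≤ r) :
    (∑ i, a i ^ r) ^ (1/r) ≤ (∑ i, a i ^ s) ^ (1/s) := by
  have hr0 : 0 < r := lt_of_lt_of_le hs hsr
  have h1 : ∑ i, a i ^ r = ∑ i, (a i ^ s) ^ (r/s) := by
    refine Finset.sum_congr rfl fun i _ => ?_
    rw [← Real.rpow_mul (ha i)]
    congr 1
    field_simp
  have h2 : ∑ i, (a i ^ s) ^ (r/s) ≤ (∑ i, a i ^ s) ^ (r/s) :=
    sum_rpow_le_rpow_sum' _ _ (fun i _ => Real.rpow_nonneg (ha i) _)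
      ((one_le_div hs).2 hsr)
  calc (∑ i, a i ^ r) ^ (1/r) ≤ ((∑ i, a i ^ s) ^ (r/s)) ^ (1/r) := by
        refine Real.rpow_le_rpow ?_ (h1 ▸ h2) (by positivity)
        exact Finset.sum_nonneg fun i _ => Real.rpow_nonneg (ha i) _
    _ = (∑ i, a i ^ s) ^ (1/s) := by
        rw [← Real.rpow_mul (Finset.sum_nonneg fun i _ => Real.rpow_nonneg (ha i) _)]
        congr 1
        field_simp

theorem sufficiency {p : ℝ} [Fact (1 ≤ ENNReal.ofReal p)] (hp : 2 ≤ p) {m : ℕ} (hm : 1 ≤ m)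
    {r : ℝ} (hr : 0 < r) (hr2 : p / (m:ℝ) ≤ r)
    (T : ContinuousMultilinearMap ℝ
      (fun _ : Fin m => lp (fun _ : ℕ => ℝ) (ENNReal.ofReal p)) ℝ) :
    ∃ C : ℝ, 0 < C ∧ ∀ (n : ℕ)
      (x : Fin m → Fin n → lp (fun _ : ℕ => ℝ) (ENNReal.ofReal p)),
      (∑ i : Fin n, ‖T (fun j => x j i)‖ ^ r) ^ (1 / r) ≤ C * ∏ j, weakL1 (x j) := by
  refine ⟨‖T‖ + 1, by positivity, fun n x => ?_⟩
  have hm0 : (0:ℝ) < (m:ℝ) := by exact_mod_cast hm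
  have hs0 : 0 < p / (m:ℝ) := div_pos (by linarith) hm0
  have habs : ∀ i : Fin n, ‖T (fun j => x j i)‖ = |T (fun j => x j i)| := fun i => rfl
  have hD := lemD hp m hm n (fun _ => T) ‖T‖ (norm_nonneg T) (fun _ => le_rfl) x
  have hwnn : 0 ≤ ∏ j, weakL1 (x j) := Finset.prod_nonneg fun j _ => weakL1_nonneg _
  calc (∑ i : Fin n, ‖T (fun j => x j i)‖ ^ r) ^ (1 / r)
      ≤ (∑ i : Fin n, ‖T (fun j => x j i)‖ ^ (p / (m:ℝ))) ^ (1 / (p / (m:ℝ))) :=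
        lnorm_mono _ (fun i => norm_nonneg _) hs0 hr2
    _ ≤ ((‖T‖ * ∏ j, weakL1 (x j)) ^ (p / (m:ℝ))) ^ (1 / (p / (m:ℝ))) := by
        refine Real.rpow_le_rpow (Finset.sum_nonneg fun i _ =>
          Real.rpow_nonneg (norm_nonneg _) _) ?_ (by positivity)
        simpa [habs] using hD
    _ = ‖T‖ * ∏ j, weakL1 (x j) := by
        rw [← Real.rpow_mul (mul_nonneg (norm_nonneg T) hwnn)]
        rw [mul_one_div, div_self hs0.ne', Real.rpow_one]
    _ ≤ (‖T‖ + 1) * ∏ j, weakL1 (x j) :=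
        mul_le_mul_of_nonneg_right (by linarith) hwnn

/-- coordinate functional as a linear map -/
def coordL (k : ℕ) : lp (fun _ : ℕ => ℝ) (ENNReal.ofReal p) →ₗ[ℝ] ℝ where
  toFun f := (f : ℕ → ℝ) k
  map_add' f g := by simp [lp.coeFn_add]
  map_smul' c f := by simp [lp.coeFn_smul]

variable (p) in
/-- pointwise product multilinear form -/
noncomputable def Pk (m : ℕ) (k : ℕ) : MultilinearMap ℝ (fun _ : Fin m => E) ℝ :=
  (MultilinearMap.mkPiAlgebra ℝ (Fin m) ℝ).compLinearMap (fun _ => coordL k)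

lemma Pk_apply (m k : ℕ) (y : Fin m → E) : Pk p m k y = ∏ j, (y j : ℕ → ℝ) k := by
  simp [Pk, coordL]; rfl

lemma diag_bound (hp : 2 ≤ p) {m : ℕ} (hpm : p ≤ (m:ℝ)) (y : Fin m → E) :
    Summable (fun k : ℕ => ∏ j, |(y j : ℕ → ℝ) k|) ∧
      ∑' k : ℕ, ∏ j, |(y j : ℕ → ℝ) k| ≤ ∏ j, ‖y j‖ := by
  have hm0 : (0:ℝ) < (m:ℝ) := by linarith
  have hp0 : (0:ℝ) < p := by linarith
  by_cases hzero : ∃ j, y j = 0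
  · obtain ⟨j0, hj0⟩ := hzero
    have hz : ∀ k : ℕ, ∏ j, |(y j : ℕ → ℝ) k| = 0 := by
      intro k
      refine Finset.prod_eq_zero (Finset.mem_univ j0) ?_
      rw [hj0]
      simp [lp.coeFn_zero]
    have h0 : (fun k : ℕ => ∏ j, |(y j : ℕ → ℝ) k|) = fun _ => 0 := funext hz
    rw [h0]
    exact ⟨summable_zero, by
      rw [tsum_zero]
      exact Finset.prod_nonneg fun j _ => norm_nonneg _⟩
  · push_neg at hzero
    have hn : ∀ j, (0:ℝ) < ‖y j‖ := fun j => norm_pos_iff.2 (hzero j)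
    have hople : p * ((m:ℝ))⁻¹ ≤ 1 := by
      rw [← div_eq_mul_inv]
      exact (div_le_one hm0).2 hpm
    have htle : ∀ (j : Fin m) (k : ℕ), |(y j : ℕ → ℝ) k| ≤ ‖y j‖ := by
      intro j k
      have hne : (ENNReal.ofReal p) ≠ 0 := by
        simp only [ne_eq, ENNReal.ofReal_eq_zero, not_le]
        linarith
      have := lp.norm_apply_le_norm hne (y j) k
      simpa using this
    have hdivsummable : ∀ j : Fin m,
        Summable fun k : ℕ => (|(y j : ℕ → ℝ) k| / ‖y j‖) ^ p := by
      intro j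
      have heq : (fun k : ℕ => (|(y j : ℕ → ℝ) k| / ‖y j‖) ^ p)
          = fun k : ℕ => ‖(y j : ℕ → ℝ) k‖ ^ p / ‖y j‖ ^ p := by
        funext k
        rw [Real.div_rpow (abs_nonneg _) (norm_nonneg _)]
        rfl
      rw [heq]
      exact (coord_summable hp (y j)).div_const _
    set g : ℕ → ℝ := fun k =>
      (∏ j, ‖y j‖) * (((m:ℝ))⁻¹ * ∑ j, (|(y j : ℕ → ℝ) k| / ‖y j‖) ^ p) with hg
    have hgsummable : Summable g :=
      Summable.mul_left _ (Summable.mul_left _ (summable_sum fun j _ => hdivsummable j))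
    have hpointwise : ∀ k : ℕ, ∏ j, |(y j : ℕ → ℝ) k| ≤ g k := by
      intro k
      have step0 : ∏ j, |(y j : ℕ → ℝ) k|
          = (∏ j, ‖y j‖) * ∏ j, (|(y j : ℕ → ℝ) k| / ‖y j‖) := by
        rw [← Finset.prod_mul_distrib]
        refine Finset.prod_congr rfl fun j _ => ?_
        rw [mul_div_cancel₀ _ (hn j).ne']
      have step1 : ∏ j, (|(y j : ℕ → ℝ) k| / ‖y j‖)
          ≤ ∏ j, ((|(y j : ℕ → ℝ) k| / ‖y j‖) ^ p) ^ ((m:ℝ))⁻¹ := by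
        refine Finset.prod_le_prod (fun j _ => div_nonneg (abs_nonneg _) (norm_nonneg _))
          (fun j _ => ?_)
        set t := |(y j : ℕ → ℝ) k| / ‖y j‖ with ht
        have ht0 : 0 ≤ t := div_nonneg (abs_nonneg _) (norm_nonneg _)
        have ht1 : t ≤ 1 := (div_le_one (hn j)).2 (htle j k)
        rcases eq_or_lt_of_le ht0 with h0 | h0
        · rw [← h0, Real.zero_rpow hp0.ne', Real.zero_rpow (by positivity)]
        · rw [← Real.rpow_mul ht0]
          calc t = t ^ (1:ℝ) := (Real.rpow_one t).symm
            _ ≤ t ^ (p * ((m:ℝ))⁻¹) :=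
              Real.rpow_le_rpow_of_exponent_ge h0 ht1 hople
      have step2 : ∏ j, ((|(y j : ℕ → ℝ) k| / ‖y j‖) ^ p) ^ ((m:ℝ))⁻¹
          ≤ ((m:ℝ))⁻¹ * ∑ j, (|(y j : ℕ → ℝ) k| / ‖y j‖) ^ p := by
        have := Real.geom_mean_le_arith_mean_weighted Finset.univ
          (fun _ : Fin m => ((m:ℝ))⁻¹)
          (fun j => (|(y j : ℕ → ℝ) k| / ‖y j‖) ^ p)
          (fun _ _ => by positivity)
          (by
            rw [Finset.sum_const, Finset.card_univ, Fintype.card_fin, nsmul_eq_mul]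
            exact mul_inv_cancel₀ hm0.ne')
          (fun j _ => Real.rpow_nonneg (div_nonneg (abs_nonneg _) (norm_nonneg _)) _)
        refine this.trans (le_of_eq ?_)
        rw [Finset.mul_sum]
      rw [hg, step0]
      exact mul_le_mul_of_nonneg_left (step1.trans step2)
        (Finset.prod_nonneg fun j _ => norm_nonneg _)
    have habs_summable : Summable (fun k : ℕ => ∏ j, |(y j : ℕ → ℝ) k|) :=
      Summable.of_nonneg_of_le (fun k => Finset.prod_nonneg fun j _ => abs_nonneg _)
        hpointwise hgsummable
    refine ⟨habs_summable, ?_⟩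
    have htsumg : ∑' k : ℕ, g k = ∏ j, ‖y j‖ := by
      rw [hg]
      rw [tsum_mul_left, tsum_mul_left, Summable.tsum_finsetSum (fun j _ => hdivsummable j)]
      have hterm : ∀ j : Fin m, ∑' k : ℕ, (|(y j : ℕ → ℝ) k| / ‖y j‖) ^ p = 1 := by
        intro j
        have heq : (fun k : ℕ => (|(y j : ℕ → ℝ) k| / ‖y j‖) ^ p)
            = fun k : ℕ => ‖(y j : ℕ → ℝ) k‖ ^ p / ‖y j‖ ^ p := by
          funext k
          rw [Real.div_rpow (abs_nonneg _) (norm_nonneg _)]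
          rfl
        rw [heq, tsum_div_const, ← norm_rpow_coords hp (y j)]
        exact div_self (Real.rpow_pos_of_pos (hn j) p).ne'
      rw [Finset.sum_congr rfl fun j _ => hterm j]
      rw [Finset.sum_const, Finset.card_univ, Fintype.card_fin, nsmul_eq_mul, mul_one]
      field_simp
    calc ∑' k : ℕ, ∏ j, |(y j : ℕ → ℝ) k| ≤ ∑' k : ℕ, g k :=
          Summable.tsum_le_tsum hpointwise habs_summable hgsummable
      _ = ∏ j, ‖y j‖ := htsumg

lemma Pk_summable (hp : 2 ≤ p) {m : ℕ} (hpm : p ≤ (m:ℝ)) (y : Fin m → E) :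
    Summable (fun k : ℕ => Pk p m k y) := by
  refine Summable.of_abs ?_
  have : (fun k : ℕ => |Pk p m k y|) = fun k : ℕ => ∏ j, |(y j : ℕ → ℝ) k| := by
    funext k
    rw [Pk_apply, Finset.abs_prod]
  rw [this]
  exact (diag_bound hp hpm y).1

variable (p) in
/-- the diagonal m-linear form on `ℓ_p` -/
noncomputable def diagForm (hp : 2 ≤ p) {m : ℕ} (hpm : p ≤ (m:ℝ)) :
    ContinuousMultilinearMap ℝ (fun _ : Fin m => E) ℝ :=
  MultilinearMap.mkContinuous
    { toFun := fun y => ∑' k : ℕ, Pk p m k y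
      map_update_add' := by
        intro inst y i a b
        have h1 : (fun k : ℕ => Pk p m k (Function.update y i (a + b)))
            = fun k : ℕ => Pk p m k (Function.update y i a)
              + Pk p m k (Function.update y i b) := by
          funext k
          exact (Pk p m k).map_update_add y i a b
        beta_reduce
        rw [h1]
        exact Summable.tsum_add (Pk_summable hp hpm _) (Pk_summable hp hpm _)
      map_update_smul' := by
        intro inst y i c a
        have h1 : (fun k : ℕ => Pk p m k (Function.update y i (c • a)))
            = fun k : ℕ => c * Pk p m k (Function.update y i a) := by
          funext k
          have := (Pk p m k).map_update_smul y i c a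
          simpa [smul_eq_mul] using this
        beta_reduce
        rw [h1, tsum_mul_left]
        simp [smul_eq_mul] }
    1
    (by
      intro y
      simp only [MultilinearMap.coe_mk, one_mul]
      have h1 : ‖∑' k : ℕ, Pk p m k y‖ ≤ ∑' k : ℕ, ‖Pk p m k y‖ := by
        refine norm_tsum_le_tsum_norm ?_
        have : (fun k : ℕ => ‖Pk p m k y‖) = fun k : ℕ => ∏ j, |(y j : ℕ → ℝ) k| := by
          funext k
          rw [Real.norm_eq_abs, Pk_apply, Finset.abs_prod]
        rw [this]
        exact (diag_bound hp hpm y).1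
      refine h1.trans ?_
      have : (fun k : ℕ => ‖Pk p m k y‖) = fun k : ℕ => ∏ j, |(y j : ℕ → ℝ) k| := by
        funext k
        rw [Real.norm_eq_abs, Pk_apply, Finset.abs_prod]
      rw [this]
      exact (diag_bound hp hpm y).2)

lemma diagForm_apply (hp : 2 ≤ p) {m : ℕ} (hpm : p ≤ (m:ℝ)) (y : Fin m → E) :
    diagForm p hp hpm y = ∑' k : ℕ, ∏ j, (y j : ℕ → ℝ) k := by
  have : diagForm p hp hpm y = ∑' k : ℕ, Pk p m k y := by
    rw [diagForm]
    exact congrFun (MultilinearMap.coe_mkContinuous _ _ _) y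
  rw [this]
  exact tsum_congr fun k => Pk_apply m k y

lemma single_coord (i k : ℕ) :
    ((lp.single (ENNReal.ofReal p) i (1:ℝ) : lp (fun _ : ℕ => ℝ) (ENNReal.ofReal p)) : ℕ → ℝ) k
      = if k = i then 1 else 0 := by
  rw [lp.single_apply]
  by_cases h : k = i
  · subst h; simp
  · simp [h]

lemma diagForm_single (hp : 2 ≤ p) {m : ℕ} (hpm : p ≤ (m:ℝ)) (hm : m ≠ 0) (i : ℕ) :
    diagForm p hp hpm (fun _ => lp.single (ENNReal.ofReal p) i (1:ℝ)) = 1 := by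
  rw [diagForm_apply]
  have h1 : ∀ k : ℕ, (∏ _j : Fin m,
      ((lp.single (ENNReal.ofReal p) i (1:ℝ) : lp (fun _ : ℕ => ℝ) (ENNReal.ofReal p)) : ℕ → ℝ) k)
      = if k = i then 1 else 0 := by
    intro k
    rw [Finset.prod_const, single_coord, Finset.card_univ, Fintype.card_fin]
    by_cases h : k = i
    · simp [h]
    · simp [h, zero_pow hm]
  rw [tsum_congr h1]
  rw [tsum_eq_single i (fun k hk => if_neg hk)]
  simp

lemma weakL1_single_le (hp : 2 ≤ p) (n : ℕ) :
    weakL1 (fun i : Fin n =>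
      (lp.single (ENNReal.ofReal p) (i:ℕ) (1:ℝ) : lp (fun _ : ℕ => ℝ) (ENNReal.ofReal p)))
      ≤ (n:ℝ) ^ (p⁻¹) := by
  have hp0 : (0:ℝ) < p := by linarith
  set e : ℕ → E := fun i => lp.single (ENNReal.ofReal p) i (1:ℝ) with he
  refine weakL1_le _ fun f hf => ?_
  set σ : Fin n → ℝ := fun i => if 0 ≤ f (e i) then 1 else -1 with hσ
  set g : E := ∑ i : Fin n, σ i • e i with hgdef
  have h1 : ∑ i : Fin n, |f (e i)| = f g := by
    rw [hgdef, map_sum]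
    refine Finset.sum_congr rfl fun i _ => ?_
    rw [map_smul, smul_eq_mul, hσ]
    by_cases h : 0 ≤ f (e i)
    · simp [h, abs_of_nonneg h]
    · simp only [if_neg h]
      rw [abs_of_neg (lt_of_not_ge h)]
      ring
  have hgc : ∀ k : ℕ, (g : ℕ → ℝ) k = if h : k < n then σ ⟨k, h⟩ else 0 := by
    intro k
    rw [hgdef]
    simp only [lp.coeFn_sum, Finset.sum_apply, lp.coeFn_smul, Pi.smul_apply, smul_eq_mul]
    by_cases h : k < n
    · rw [dif_pos h]
      rw [Finset.sum_eq_single (⟨k, h⟩ : Fin n)]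
      · rw [he]; simp only [single_coord]; simp
      · intro b _ hb
        rw [he]; simp only [single_coord]
        have : k ≠ (b : ℕ) := by
          intro hc
          apply hb
          ext
          simp [← hc]
        simp [this]
      · intro hc
        exact absurd (Finset.mem_univ _) hc
    · rw [dif_neg h]
      refine Finset.sum_eq_zero fun b _ => ?_
      rw [he]; simp only [single_coord]
      have : k ≠ (b : ℕ) := by
        intro hc
        exact h (hc ▸ b.2)
      simp [this]
  have h2 : ‖g‖ ^ p = (n:ℝ) := by
    rw [norm_rpow_coords hp g]
    have hsupp : ∀ k ∉ Finset.range n, ‖(g : ℕ → ℝ) k‖ ^ p = 0 := by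
      intro k hk
      rw [hgc k, dif_neg (by simpa using hk)]
      simp [Real.zero_rpow hp0.ne']
    rw [tsum_eq_sum hsupp]
    have : ∀ k ∈ Finset.range n, ‖(g : ℕ → ℝ) k‖ ^ p = 1 := by
      intro k hk
      have hkn : k < n := Finset.mem_range.1 hk
      rw [hgc k, dif_pos hkn, hσ]
      by_cases h : 0 ≤ f (e (⟨k, hkn⟩ : Fin n)) <;> simp [h, Real.one_rpow]
    rw [Finset.sum_congr rfl this]
    simp
  have h3 : ‖g‖ ≤ (n:ℝ) ^ (p⁻¹) := by
    have : ‖g‖ = ((n:ℝ)) ^ (p⁻¹) := by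
      have h4 : (‖g‖ ^ p) ^ (p⁻¹) = ‖g‖ := by
        rw [← Real.rpow_mul (norm_nonneg g), mul_inv_cancel₀ hp0.ne', Real.rpow_one]
      rw [← h4, h2]
    exact this.le
  rw [h1]
  calc f g ≤ |f g| := le_abs_self _
    _ = ‖f g‖ := rfl
    _ ≤ ‖f‖ * ‖g‖ := f.le_opNorm g
    _ ≤ 1 * ((n:ℝ) ^ (p⁻¹)) := mul_le_mul hf h3 (norm_nonneg g) zero_le_one
    _ = (n:ℝ) ^ (p⁻¹) := one_mul _

theorem necessity (hp : 2 ≤ p) {m : ℕ} (hpm : p ≤ (m:ℝ)) {r : ℝ} (hr : 0 < r)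
    (H : ∃ C : ℝ, 0 < C ∧ ∀ (n : ℕ)
      (x : Fin m → Fin n → lp (fun _ : ℕ => ℝ) (ENNReal.ofReal p)),
      (∑ i : Fin n, ‖diagForm p hp hpm (fun j => x j i)‖ ^ r) ^ (1 / r)
        ≤ C * ∏ j, weakL1 (x j)) :
    p / (m:ℝ) ≤ r := by
  have hm0 : (0:ℝ) < (m:ℝ) := by linarith
  have hmne : m ≠ 0 := by
    intro h
    rw [h] at hm0
    simpa using hm0
  have hp0 : (0:ℝ) < p := by linarith
  by_contra hcon
  push_neg at hcon
  obtain ⟨C, hC, hineq⟩ := H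
  -- key inequality for every n
  have key : ∀ n : ℕ, (n:ℝ) ^ (1/r) ≤ C * ((n:ℝ) ^ ((m:ℝ)/p)) := by
    intro n
    have happ := hineq n (fun _ i =>
      (lp.single (ENNReal.ofReal p) (i:ℕ) (1:ℝ) : lp (fun _ : ℕ => ℝ) (ENNReal.ofReal p)))
    have hLHS : (∑ i : Fin n,
        ‖diagForm p hp hpm (fun _ => lp.single (ENNReal.ofReal p) (i:ℕ) (1:ℝ))‖ ^ r) ^ (1/r)
        = (n:ℝ) ^ (1/r) := by
      have : ∀ i : Fin n,
          ‖diagForm p hp hpm (fun _ => lp.single (ENNReal.ofReal p) ((i:ℕ)) (1:ℝ))‖ ^ r = 1 := by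
        intro i
        rw [diagForm_single hp hpm hmne (i:ℕ)]
        simp [Real.one_rpow]
      rw [Finset.sum_congr rfl fun i _ => this i]
      simp
    rw [hLHS] at happ
    refine happ.trans ?_
    have hwb : ∀ j : Fin m, weakL1 (fun i : Fin n =>
        (lp.single (ENNReal.ofReal p) (i:ℕ) (1:ℝ) : lp (fun _ : ℕ => ℝ) (ENNReal.ofReal p)))
        ≤ (n:ℝ) ^ (p⁻¹) := fun _ => weakL1_single_le hp n
    have hprod : (∏ _j : Fin m, weakL1 (fun i : Fin n =>
        (lp.single (ENNReal.ofReal p) (i:ℕ) (1:ℝ) : lp (fun _ : ℕ => ℝ) (ENNReal.ofReal p))))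
        ≤ ((n:ℝ) ^ (p⁻¹)) ^ (m:ℕ) := by
      calc (∏ _j : Fin m, weakL1 (fun i : Fin n =>
            (lp.single (ENNReal.ofReal p) (i:ℕ) (1:ℝ) : lp (fun _ : ℕ => ℝ) (ENNReal.ofReal p))))
          ≤ ∏ _j : Fin m, (n:ℝ) ^ (p⁻¹) :=
            Finset.prod_le_prod (fun j _ => weakL1_nonneg _) (fun j _ => hwb j)
        _ = ((n:ℝ) ^ (p⁻¹)) ^ (m:ℕ) := by
            rw [Finset.prod_const, Finset.card_univ, Fintype.card_fin]
    have hpow : ((n:ℝ) ^ (p⁻¹)) ^ (m:ℕ) = (n:ℝ) ^ ((m:ℝ)/p) := by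
      rw [← Real.rpow_natCast ((n:ℝ) ^ (p⁻¹)) m, ← Real.rpow_mul (Nat.cast_nonneg n)]
      congr 1
      field_simp
    calc C * ∏ _j : Fin m, weakL1 (fun i : Fin n =>
          (lp.single (ENNReal.ofReal p) (i:ℕ) (1:ℝ) : lp (fun _ : ℕ => ℝ) (ENNReal.ofReal p)))
        ≤ C * (((n:ℝ) ^ (p⁻¹)) ^ (m:ℕ)) := mul_le_mul_of_nonneg_left hprod hC.le
      _ = C * ((n:ℝ) ^ ((m:ℝ)/p)) := by rw [hpow]
  -- derive contradiction
  set δ : ℝ := 1/r - (m:ℝ)/p with hδ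
  have hδpos : 0 < δ := by
    rw [hδ, sub_pos]
    have h1 : (m:ℝ)/p = 1/(p/(m:ℝ)) := by
      rw [one_div_div]
    rw [h1]
    exact one_div_lt_one_div_of_lt hr hcon
  set B : ℝ := max 1 ((C+1) ^ (1/δ)) with hB
  set N : ℕ := ⌈B⌉₊ with hN
  have hNB : B ≤ (N:ℝ) := Nat.le_ceil B
  have hN1 : (1:ℝ) ≤ (N:ℝ) := le_trans (le_max_left _ _) hNB
  have hN0 : (0:ℝ) < (N:ℝ) := by linarith
  have hkey := key N
  have hsplit : (N:ℝ) ^ (1/r) = (N:ℝ) ^ δ * (N:ℝ) ^ ((m:ℝ)/p) := by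
    rw [← Real.rpow_add hN0]
    congr 1
    rw [hδ]
    ring
  rw [hsplit] at hkey
  have hpos : (0:ℝ) < (N:ℝ) ^ ((m:ℝ)/p) := Real.rpow_pos_of_pos hN0 _
  have hNδ : (N:ℝ) ^ δ ≤ C := by
    have := (mul_le_mul_iff_of_pos_right hpos).1 hkey
    exact this
  have hNδ2 : C + 1 ≤ (N:ℝ) ^ δ := by
    have h1 : (C+1) ^ (1/δ) ≤ (N:ℝ) := le_trans (le_max_right _ _) hNB
    have h2 : ((C+1) ^ (1/δ)) ^ δ ≤ (N:ℝ) ^ δ :=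
      Real.rpow_le_rpow (Real.rpow_nonneg (by linarith) _) h1 hδpos.le
    have h3 : ((C+1) ^ (1/δ)) ^ δ = C + 1 := by
      rw [← Real.rpow_mul (by linarith : (0:ℝ) ≤ C + 1)]
      rw [one_div, inv_mul_cancel₀ hδpos.ne', Real.rpow_one]
    linarith
  linarith

end lp

/-- For `m ≥ p ≥ 2`, every bounded `m`-linear form on `ℓ_p^m` is absolutely `(r,1)`-summing
iff `r ≥ p/m`. -/
theorem stmt_19 (m : ℕ) (p : ℝ) [Fact (1 ≤ ENNReal.ofReal p)] (hp : 2 ≤ p) (hpm : p ≤ (m : ℝ)) (r : ℝ) (hr : 0 < r) :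
    (∀ T : ContinuousMultilinearMap ℝ
        (fun _ : Fin m => lp (fun _ : ℕ => ℝ) (ENNReal.ofReal p)) ℝ,
      ∃ C : ℝ, 0 < C ∧ ∀ (n : ℕ)
        (x : Fin m → Fin n → lp (fun _ : ℕ => ℝ) (ENNReal.ofReal p)),
        (∑ i : Fin n, ‖T (fun j => x j i)‖ ^ r) ^ (1 / r) ≤ C * ∏ j, weakL1 (x j))
      ↔ p / (m : ℝ) ≤ r := by
  have hm : 1 ≤ m := by
    have : (1:ℝ) ≤ (m:ℝ) := by linarith
    exact_mod_cast this
  constructor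
  · intro H
    exact necessity hp hpm hr (H (diagForm p hp hpm))
  · intro hr2 T
    exact sufficiency hp hm hr hr2 T
end
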